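/- arXiv:2303.12230 — 6 statements merged into one kernel-verified Lean document; each statement's English description precedes it below -/
import Mathlib

section
/- If T is a bounded linear operator on a Banach space X and there exists a bounded subset A of X whose orbit under T (i.e. {T^n x : n ∈ ℕ, x ∈ A}) is weakly dense in X, then for every non-zero continuous linear functional x* on X, the orbit of x* under the adjoint T* is unbounded. -/
open Filter Topology

/-- If `T` is a bounded operator on a complex Banach space `X` and some bounded set `A`
has weakly dense orbit under `T`, then the orbit of every non-zero continuous linear
functional under the Banach-space adjoint of `T` is unbounded. -/
theorem stmt0 {X : Type*} [NormedAddCommGroup X] [NormedSpace ℂ X] [CompleteSpace X]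
    (T : X →L[ℂ] X) (A : Set X) (hA : Bornology.IsBounded A)
    (hdense : Dense (toWeakSpace ℂ X '' {z : X | ∃ (n : ℕ) (a : X), a ∈ A ∧ z = (T ^ n) a})) :
    ∀ f : X →L[ℂ] ℂ, f ≠ 0 → ¬ ∃ M : ℝ, ∀ n : ℕ, ‖f.comp (T ^ n)‖ ≤ M := by
  intro f hf ⟨M, hM⟩
  obtain ⟨C, hC⟩ := (isBounded_iff_forall_norm_le).mp hA
  have hM0 : 0 ≤ M := le_trans (norm_nonneg _) (hM 0)
  set K : ℝ := M * C with hK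
  -- the evaluation of f is weakly continuous
  have hcont : Continuous fun w : WeakSpace ℂ X => (topDualPairing ℂ X).flip w f :=
    WeakBilin.eval_continuous _ f
  have hclosed : IsClosed {w : WeakSpace ℂ X | ‖(topDualPairing ℂ X).flip w f‖ ≤ K} :=
    isClosed_le (hcont.norm) continuous_const
  -- the image of the orbit lies in this closed set
  have hsub : toWeakSpace ℂ X '' {z : X | ∃ (n : ℕ) (a : X), a ∈ A ∧ z = (T ^ n) a}
      ⊆ {w : WeakSpace ℂ X | ‖(topDualPairing ℂ X).flip w f‖ ≤ K} := by
    rintro w ⟨z, ⟨n, a, ha, rfl⟩, rfl⟩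
    have h1 : ‖f ((T ^ n) a)‖ ≤ ‖f.comp (T ^ n)‖ * ‖a‖ := (f.comp (T ^ n)).le_opNorm a
    have h2 : ‖f.comp (T ^ n)‖ * ‖a‖ ≤ M * C :=
      mul_le_mul (hM n) (hC a ha) (norm_nonneg _) hM0
    exact le_trans h1 h2
  -- by density, f is bounded by K everywhere
  have hall : ∀ x : X, ‖f x‖ ≤ K := by
    intro x
    have : toWeakSpace ℂ X x ∈ {w : WeakSpace ℂ X | ‖(topDualPairing ℂ X).flip w f‖ ≤ K} := by
      have := (hdense.closure_eq ▸ (closure_minimal hsub hclosed) :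
        (Set.univ : Set (WeakSpace ℂ X)) ⊆ _)
      exact this (Set.mem_univ _)
    exact this
  -- hence f = 0, contradiction
  obtain ⟨x, hx⟩ := DFunLike.ne_iff.mp hf
  have hx0 : f x ≠ 0 := by simpa using hx
  have hK0 : 0 ≤ K := le_trans (norm_nonneg _) (hall 0)
  set c : ℂ := (K + 1) / f x with hc
  have : ‖f (c • x)‖ ≤ K := hall _
  have hfc : f (c • x) = K + 1 := by
    rw [map_smul, hc, smul_eq_mul, div_mul_cancel₀ _ hx0]
  rw [hfc] at this
  have : (K + 1 : ℝ) ≤ K := by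
    have := this
    rwa [show ‖((K : ℂ) + 1)‖ = K + 1 by
      rw [show ((K : ℂ) + 1) = ((K + 1 : ℝ) : ℂ) by push_cast; ring,
        Complex.norm_real, Real.norm_of_nonneg (by linarith)]] at this
  linarith
end

section
/- Let ω = (ω_n) be a sequence of positive weights on ℕ with sup_n ω_n/ω_{n+1} < ∞, and let B be the backward shift on ℓ^p(ℕ, ω) for 1 ≤ p < ∞. If there exists a bounded subset C of ℓ^p(ℕ, ω) such that the orbit of C under B has a non-zero weak limit point, then there exists a strictly increasing sequence (n_k) of positive integers with sup_k ω_{n_k} < ∞. -/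
open MeasureTheory Filter Topology
open scoped ENNReal

noncomputable section

/-- The weighted measure on the index set `I` giving the point `k` mass `(ω k) ^ p`,
so that `Lp ℂ p (wMeasure p ω)` is the weighted sequence space `ℓ^p(I, ω)`. -/
def wMeasure {I : Type*} [MeasurableSpace I] (p : ENNReal) (ω : I → ℝ) : Measure I :=
  Measure.sum (fun k => ENNReal.ofReal ((ω k) ^ p.toReal) • Measure.dirac k)


lemma wMeasure_singleton_pos (p : ENNReal) (ω : ℕ → ℝ) (hω : ∀ k, 0 < ω k) (j : ℕ) :
    0 < wMeasure p ω {j} := by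
  have h1 : (ENNReal.ofReal ((ω j) ^ p.toReal) • Measure.dirac j) {j} ≤ wMeasure p ω {j} :=
    Measure.le_sum _ j _
  have h2 : (ENNReal.ofReal ((ω j) ^ p.toReal) • Measure.dirac j) {j}
      = ENNReal.ofReal ((ω j) ^ p.toReal) := by
    simp [Measure.smul_apply]
  refine lt_of_lt_of_le ?_ h1
  rw [h2]
  exact ENNReal.ofReal_pos.mpr (Real.rpow_pos_of_pos (hω j) _)

lemma wMeasure_ae_eq {p : ENNReal} {ω : ℕ → ℝ} (hω : ∀ k, 0 < ω k) {α : Type*}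
    {f g : ℕ → α} (h : f =ᵐ[wMeasure p ω] g) : ∀ j, f j = g j := by
  intro j
  by_contra hne
  have hsub : {j} ⊆ {a | f a ≠ g a} := by simp [hne]
  have : wMeasure p ω {j} = 0 := measure_mono_null hsub h
  exact absurd this (wMeasure_singleton_pos p ω hω j).ne'

lemma coord_bound (p : ENNReal) [Fact (1 ≤ p)] (hp : p ≠ ∞) (ω : ℕ → ℝ) (hω : ∀ k, 0 < ω k)
    (x : Lp ℂ p (wMeasure p ω)) (j : ℕ) : ω j * ‖(x : ℕ → ℂ) j‖ ≤ ‖x‖ := by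
  have hp0 : p ≠ 0 := by
    intro h; exact absurd (h ▸ Fact.out : (1:ENNReal) ≤ 0) (by norm_num)
  have hr : 0 < p.toReal := ENNReal.toReal_pos hp0 hp
  set r := p.toReal with hrdef
  have key : ENNReal.ofReal ((ω j) ^ r) * (‖(x : ℕ → ℂ) j‖₊ : ℝ≥0∞) ^ r
        ≤ ∫⁻ a, (‖(x : ℕ → ℂ) a‖₊ : ℝ≥0∞) ^ r ∂(wMeasure p ω) := by
    have h1 : ∫⁻ a, (‖(x : ℕ → ℂ) a‖₊ : ℝ≥0∞) ^ r
          ∂(ENNReal.ofReal ((ω j) ^ r) • Measure.dirac j)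
        = ENNReal.ofReal ((ω j) ^ r) * (‖(x : ℕ → ℂ) j‖₊ : ℝ≥0∞) ^ r := by
      rw [lintegral_smul_measure, lintegral_dirac, smul_eq_mul]
    rw [← h1]
    exact lintegral_mono' (Measure.le_sum _ j) le_rfl
  have hsn : eLpNorm (x : ℕ → ℂ) p (wMeasure p ω)
      = (∫⁻ a, (‖(x : ℕ → ℂ) a‖₊ : ℝ≥0∞) ^ r ∂(wMeasure p ω)) ^ (1 / r) :=
    eLpNorm_eq_lintegral_rpow_enorm_toReal hp0 hp
  have key2 : ENNReal.ofReal (ω j) * (‖(x : ℕ → ℂ) j‖₊ : ℝ≥0∞)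
      ≤ eLpNorm (x : ℕ → ℂ) p (wMeasure p ω) := by
    rw [hsn]
    calc ENNReal.ofReal (ω j) * (‖(x : ℕ → ℂ) j‖₊ : ℝ≥0∞)
        = (ENNReal.ofReal ((ω j) ^ r) * (‖(x : ℕ → ℂ) j‖₊ : ℝ≥0∞) ^ r) ^ (1 / r) := by
          rw [ENNReal.mul_rpow_of_nonneg _ _ (by positivity),
            ENNReal.ofReal_rpow_of_pos (Real.rpow_pos_of_pos (hω j) r),
            ← Real.rpow_mul (hω j).le, mul_one_div_cancel hr.ne', Real.rpow_one,
            ← ENNReal.rpow_mul, mul_one_div_cancel hr.ne', ENNReal.rpow_one]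
      _ ≤ _ := ENNReal.rpow_le_rpow key (by positivity)
  have hlt : eLpNorm (x : ℕ → ℂ) p (wMeasure p ω) ≠ ∞ := (Lp.eLpNorm_lt_top x).ne
  have := ENNReal.toReal_mono hlt key2
  rw [ENNReal.toReal_mul, ENNReal.toReal_ofReal (hω j).le] at this
  simpa [Lp.norm_def] using this

/-- Evaluation at coordinate `j` as a continuous linear functional. -/
def evalCLM (p : ENNReal) [Fact (1 ≤ p)] (hp : p ≠ ∞) (ω : ℕ → ℝ) (hω : ∀ k, 0 < ω k)
    (j : ℕ) : Lp ℂ p (wMeasure p ω) →L[ℂ] ℂ :=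
  LinearMap.mkContinuous
    { toFun := fun x => (x : ℕ → ℂ) j
      map_add' := fun a b => by
        have := wMeasure_ae_eq (p := p) hω (Lp.coeFn_add a b) j
        simpa using this
      map_smul' := fun c a => by
        have := wMeasure_ae_eq (p := p) hω (Lp.coeFn_smul c a) j
        simpa using this }
    ((ω j)⁻¹)
    (by
      intro x
      have h := coord_bound p hp ω hω x j
      have hωj := hω j
      rw [inv_mul_eq_div, le_div_iff₀ hωj]
      simpa [mul_comm] using h)

lemma evalCLM_apply (p : ENNReal) [Fact (1 ≤ p)] (hp : p ≠ ∞) (ω : ℕ → ℝ) (hω : ∀ k, 0 < ω k)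
    (j : ℕ) (x : Lp ℂ p (wMeasure p ω)) : evalCLM p hp ω hω j x = (x : ℕ → ℂ) j := rfl

theorem stmt1 (p : ENNReal) [Fact (1 ≤ p)] (hp : p ≠ ∞) (ω : ℕ → ℝ) (hω : ∀ k, 0 < ω k)
    (hbdd : ∃ C : ℝ, ∀ n, ω n / ω (n + 1) ≤ C)
    (B : Lp ℂ p (wMeasure p ω) →L[ℂ] Lp ℂ p (wMeasure p ω))
    (hB : ∀ (x : Lp ℂ p (wMeasure p ω)) (k : ℕ), B x k = x (k + 1))
    (C : Set (Lp ℂ p (wMeasure p ω))) (hC : Bornology.IsBounded C)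
    (n : ℕ → ℕ) (hn : StrictMono n) (x : ℕ → Lp ℂ p (wMeasure p ω)) (hx : ∀ k, x k ∈ C)
    (y : Lp ℂ p (wMeasure p ω)) (hy : y ≠ 0)
    (hweak : ∀ f : Lp ℂ p (wMeasure p ω) →L[ℂ] ℂ,
      Tendsto (fun k => f ((B ^ n k) (x k))) atTop (nhds (f y))) :
    ∃ m : ℕ → ℕ, StrictMono m ∧ (∀ k, 0 < m k) ∧ ∃ M : ℝ, ∀ k, ω (m k) ≤ M := by
  -- find a coordinate where y is nonzero
  obtain ⟨j, hj⟩ : ∃ j, (y : ℕ → ℂ) j ≠ 0 := by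
    by_contra h
    push_neg at h
    apply hy
    apply Lp.ext
    have h0 := wMeasure_ae_eq (p := p) hω (Lp.coeFn_zero ℂ p (wMeasure p ω))
    refine Filter.Eventually.of_forall fun a => ?_
    rw [h a, h0 a]
    simp
  -- iterated shift formula
  have hpow : ∀ (m : ℕ) (z : Lp ℂ p (wMeasure p ω)) (i : ℕ),
      ((B ^ m) z : ℕ → ℂ) i = (z : ℕ → ℂ) (i + m) := by
    intro m
    induction m with
    | zero => intro z i; simp
    | succ m ih =>
      intro z i
      rw [pow_succ', ContinuousLinearMap.mul_apply, hB ((B ^ m) z) i, ih z (i + 1)]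
      congr 1
      omega
  have htend : Tendsto (fun k => ((x k : ℕ → ℂ)) (j + n k)) atTop (nhds ((y : ℕ → ℂ) j)) := by
    have := hweak (evalCLM p hp ω hω j)
    simpa only [evalCLM_apply, hpow] using this
  set c := ‖(y : ℕ → ℂ) j‖ with hc
  have hcpos : 0 < c := norm_pos_iff.mpr hj
  have hev : ∀ᶠ k in atTop, c / 2 ≤ ‖((x k : ℕ → ℂ)) (j + n k)‖ :=
    (htend.norm).eventually (eventually_ge_nhds (by linarith))
  obtain ⟨K, hK⟩ := eventually_atTop.mp hev
  obtain ⟨R, hR⟩ := (isBounded_iff_forall_norm_le).mp hC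
  refine ⟨fun k => j + n (k + K + 1), fun a b hab => by
    exact Nat.add_lt_add_left (hn (by omega)) j, fun k => ?_, 2 * R / c, fun k => ?_⟩
  · have : k + K + 1 ≤ n (k + K + 1) := hn.le_apply
    show 0 < j + n (k + K + 1)
    omega
  · have h1 := coord_bound p hp ω hω (x (k + K + 1)) (j + n (k + K + 1))
    have h2 : c / 2 ≤ ‖((x (k + K + 1) : ℕ → ℂ)) (j + n (k + K + 1))‖ := hK _ (by omega)
    have h3 : ‖x (k + K + 1)‖ ≤ R := hR _ (hx _)
    have h4 := hω (j + n (k + K + 1))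
    show ω (j + n (k + K + 1)) ≤ 2 * R / c
    rw [le_div_iff₀ hcpos]
    nlinarith [mul_le_mul_of_nonneg_left h2 h4.le]
end
end

section
/- Let ω = (ω_n) be a sequence of positive weights on ℕ with sup_n ω_n/ω_{n+1} < ∞, and let B be the backward shift on ℓ^p(ℕ, ω). If there exists a strictly increasing sequence (n_k) of positive integers with sup_k ω_{n_k} < ∞, then there exists a bounded subset C of ℓ^p(ℕ, ω) such that the orbit of C under B has a non-zero (norm) limit point. -/
open MeasureTheory Filter Topology
open scoped ENNReal

noncomputable section

lemma wMeasure_singleton (p : ENNReal) (ω : ℕ → ℝ) (j : ℕ) :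
    wMeasure p ω {j} = ENNReal.ofReal (ω j ^ p.toReal) := by
  rw [wMeasure, Measure.sum_apply _ (measurableSet_singleton j)]
  rw [tsum_eq_single j]
  · simp [Measure.dirac_apply]
  · intro k hk
    simp [Measure.dirac_apply, Set.indicator, hk]

lemma wMeasure_null (p : ENNReal) (ω : ℕ → ℝ) (hω : ∀ k, 0 < ω k)
    (hpt : 0 < p.toReal) {s : Set ℕ} (hs : wMeasure p ω s = 0) : s = ∅ := by
  by_contra h
  obtain ⟨j, hj⟩ := Set.nonempty_iff_ne_empty.2 h
  have h1 : wMeasure p ω {j} ≤ wMeasure p ω s :=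
    measure_mono (Set.singleton_subset_iff.2 hj)
  rw [wMeasure_singleton, hs] at h1
  have : (0:ℝ) < ω j ^ p.toReal := Real.rpow_pos_of_pos (hω j) _
  have h2 : ENNReal.ofReal (ω j ^ p.toReal) = 0 := le_antisymm h1 zero_le
  rw [ENNReal.ofReal_eq_zero] at h2
  exact absurd h2 (not_le.2 this)

lemma ae_to_all (p : ENNReal) (ω : ℕ → ℝ) (hω : ∀ k, 0 < ω k)
    (hpt : 0 < p.toReal) {f g : ℕ → ℂ} (h : f =ᶠ[ae (wMeasure p ω)] g) :
    ∀ j, f j = g j := by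
  intro j
  by_contra hj
  have : ({x | ¬ f x = g x} : Set ℕ) = ∅ :=
    wMeasure_null p ω hω hpt (by simpa [Filter.EventuallyEq, ae_iff] using h)
  exact absurd this (Set.nonempty_iff_ne_empty.1 ⟨j, hj⟩)

theorem stmt2 (p : ENNReal) [Fact (1 ≤ p)] (hp : p ≠ ∞) (ω : ℕ → ℝ) (hω : ∀ k, 0 < ω k)
    (hbdd : ∃ C : ℝ, ∀ n, ω n / ω (n + 1) ≤ C)
    (B : Lp ℂ p (wMeasure p ω) →L[ℂ] Lp ℂ p (wMeasure p ω))
    (hB : ∀ (x : Lp ℂ p (wMeasure p ω)) (k : ℕ), B x k = x (k + 1))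
    (n : ℕ → ℕ) (hn : StrictMono n) (hnpos : ∀ k, 0 < n k)
    (M : ℝ) (hM : ∀ k, ω (n k) ≤ M) :
    ∃ C : Set (Lp ℂ p (wMeasure p ω)), Bornology.IsBounded C ∧
      ∃ m : ℕ → ℕ, StrictMono m ∧ ∃ x : ℕ → Lp ℂ p (wMeasure p ω), (∀ k, x k ∈ C) ∧
        ∃ y : Lp ℂ p (wMeasure p ω), y ≠ 0 ∧
          Tendsto (fun k => (B ^ m k) (x k)) atTop (nhds y) := by
  have hp1 : (1:ENNReal) ≤ p := Fact.out
  have hp0 : p ≠ 0 := by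
    intro h; rw [h] at hp1; exact absurd hp1 (by simp)
  have hpt : 0 < p.toReal := ENNReal.toReal_pos hp0 hp
  -- indicator Lp elements
  have hfin : ∀ j : ℕ, wMeasure p ω {j} ≠ ⊤ := by
    intro j; rw [wMeasure_singleton]; exact ENNReal.ofReal_ne_top
  set e : ℕ → Lp ℂ p (wMeasure p ω) := fun j =>
    indicatorConstLp p (measurableSet_singleton j) (hfin j) (1:ℂ) with he
  have hecoe : ∀ j i : ℕ, (e j : ℕ → ℂ) i = Set.indicator {j} (fun _ => (1:ℂ)) i := by
    intro j
    exact ae_to_all p ω hω hpt indicatorConstLp_coeFn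
  have henorm : ∀ j : ℕ, ‖e j‖ = ω j := by
    intro j
    rw [he, norm_indicatorConstLp hp0 hp, measureReal_def, wMeasure_singleton]
    rw [ENNReal.toReal_ofReal (Real.rpow_pos_of_pos (hω j) _).le]
    rw [norm_one, one_mul, ← Real.rpow_mul (hω j).le, mul_one_div, div_self hpt.ne',
      Real.rpow_one]
  -- pointwise action of powers of B
  have hBpow : ∀ (m : ℕ) (x : Lp ℂ p (wMeasure p ω)) (i : ℕ),
      ((B ^ m) x : ℕ → ℂ) i = x (i + m) := by
    intro m
    induction m with
    | zero => intro x i; simp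
    | succ m ih =>
        intro x i
        rw [pow_succ, ContinuousLinearMap.mul_apply, ih (B x) i, hB x (i + m)]
        ring_nf
  -- B^(n k) (e (n k)) = e 0
  have hkey : ∀ k : ℕ, (B ^ n k) (e (n k)) = e 0 := by
    intro k
    apply Lp.ext
    apply Filter.Eventually.of_forall
    intro i
    rw [hBpow, hecoe, hecoe]
    by_cases hi : i = 0
    · subst hi; simp
    · have h1 : i + n k ∉ ({n k} : Set ℕ) := by simp [hi]
      have h2 : i ∉ ({0} : Set ℕ) := by simp [hi]
      rw [Set.indicator_of_notMem h1, Set.indicator_of_notMem h2]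
  refine ⟨Metric.closedBall 0 (max M 0), Metric.isBounded_closedBall,
    n, hn, fun k => e (n k), ?_, e 0, ?_, ?_⟩
  · intro k
    rw [Metric.mem_closedBall, dist_zero_right, henorm]
    exact le_max_of_le_left (hM k)
  · intro h
    have := henorm 0
    rw [h, norm_zero] at this
    exact absurd this.symm (hω 0).ne'
  · have : (fun k => (B ^ n k) (e (n k))) = fun _ => e 0 := funext hkey
    rw [this]
    exact tendsto_const_nhds
end
end

section
/- Let B be the backward shift on ℓ^p(ℕ, ω) with sup_n ω_n/ω_{n+1} < ∞. Suppose there exist a strictly increasing sequence (n_k) of integers, a convergent sequence (x_k) in ℓ^p(ℕ, ω), a vector y, and δ > 0 such that the closed ball of center y and radius δ does not contain 0 and ‖B^{n_k} x_k − y‖ < δ for all k. Then liminf_{n→∞} ω_n = 0. -/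
open MeasureTheory Filter Topology
open scoped ENNReal

noncomputable section

theorem stmt4 (p : ENNReal) [Fact (1 ≤ p)] (hp : p ≠ ∞) (ω : ℕ → ℝ) (hω : ∀ k, 0 < ω k)
    (hbdd : ∃ C : ℝ, ∀ n, ω n / ω (n + 1) ≤ C)
    (B : Lp ℂ p (wMeasure p ω) →L[ℂ] Lp ℂ p (wMeasure p ω))
    (hB : ∀ (x : Lp ℂ p (wMeasure p ω)) (k : ℕ), B x k = x (k + 1))
    (n : ℕ → ℕ) (hn : StrictMono n) (x : ℕ → Lp ℂ p (wMeasure p ω))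
    (z : Lp ℂ p (wMeasure p ω)) (hconv : Tendsto x atTop (nhds z))
    (y : Lp ℂ p (wMeasure p ω)) (δ : ℝ) (hδ : 0 < δ)
    (h0 : (0 : Lp ℂ p (wMeasure p ω)) ∉ Metric.closedBall y δ)
    (hball : ∀ k, ‖(B ^ n k) (x k) - y‖ < δ) :
    Filter.liminf ω Filter.atTop = 0 := by
  classical
  have hp1 : 1 ≤ p := Fact.out
  have hp0 : p ≠ 0 := (zero_lt_one.trans_le hp1).ne'
  set q : ℝ := p.toReal with hqdef
  have hq0 : 0 < q := ENNReal.toReal_pos hp0 hp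
  set w : ℕ → ℝ≥0∞ := fun m => ENNReal.ofReal (ω m ^ q) with hwdef
  have hwpos : ∀ m, 0 < w m := fun m => by
    simpa [hwdef] using ENNReal.ofReal_pos.2 (Real.rpow_pos_of_pos (hω m) q)
  have hw0 : ∀ m, w m ≠ 0 := fun m => (hwpos m).ne'
  have hwt : ∀ m, w m ≠ ∞ := fun m => ENNReal.ofReal_ne_top
  -- lintegral formula
  have hint : ∀ f : ℕ → ℝ≥0∞, ∫⁻ a, f a ∂(wMeasure p ω) = ∑' m, w m * f m := by
    intro f
    rw [wMeasure, lintegral_sum_measure]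
    congr 1; funext m
    rw [lintegral_smul_measure, lintegral_dirac, smul_eq_mul]
  -- null sets are empty
  have hnull : ∀ s : Set ℕ, (wMeasure p ω) s = 0 → s = ∅ := by
    intro s hs
    by_contra hne
    obtain ⟨m, hm⟩ := Set.nonempty_iff_ne_empty.2 hne
    have hmeas : MeasurableSet s := (Set.to_countable s).measurableSet
    have h1 : (wMeasure p ω) s = ∑' k, w k * Measure.dirac k s := by
      rw [wMeasure, Measure.sum_apply _ hmeas]
      exact tsum_congr fun k => by rw [Measure.smul_apply, smul_eq_mul]
    have h2 : w m * Measure.dirac m s ≤ (wMeasure p ω) s := h1 ▸ ENNReal.le_tsum m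
    rw [Measure.dirac_apply' _ hmeas, Set.indicator_of_mem hm] at h2
    simp only [Pi.one_apply, mul_one, hs, nonpos_iff_eq_zero] at h2
    exact hw0 m h2
  -- a.e. equality is equality
  have hae : ∀ f g : ℕ → ℂ, f =ᵐ[wMeasure p ω] g → f = g := by
    intro f g hfg
    funext a
    by_contra hne
    have : a ∈ ({a | f a ≠ g a} : Set ℕ) := hne
    rw [Filter.EventuallyEq, ae_iff] at hfg
    rw [hnull _ hfg] at this
    exact this
  have hmeas : ∀ f : ℕ → ℂ, AEStronglyMeasurable f (wMeasure p ω) :=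
    fun f => (measurable_of_countable f).aestronglyMeasurable
  -- eLpNorm formula
  have hsn : ∀ f : ℕ → ℂ, eLpNorm f p (wMeasure p ω) = (∑' m, w m * (‖f m‖₊ : ℝ≥0∞) ^ q) ^ (1/q) := by
    intro f
    rw [eLpNorm_eq_lintegral_rpow_enorm_toReal hp0 hp, hint]
    rfl
  have hrpowq : ∀ a : ℝ≥0∞, (a ^ (1/q)) ^ q = a := by
    intro a
    rw [← ENNReal.rpow_mul, one_div, inv_mul_cancel₀ hq0.ne', ENNReal.rpow_one]
  have hrpowq' : ∀ a : ℝ≥0∞, (a ^ q) ^ (1/q) = a := by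
    intro a
    rw [← ENNReal.rpow_mul, mul_one_div, div_self hq0.ne', ENNReal.rpow_one]
  -- indicator sum formula
  have hind : ∀ (s : Set ℕ) (f : ℕ → ℂ) (m : ℕ),
      w m * (‖Set.indicator s f m‖₊ : ℝ≥0∞) ^ q
        = Set.indicator s (fun m => w m * (‖f m‖₊ : ℝ≥0∞) ^ q) m := by
    intro s f m
    by_cases hm : m ∈ s
    · rw [Set.indicator_of_mem hm, Set.indicator_of_mem hm]
    · rw [Set.indicator_of_notMem hm, Set.indicator_of_notMem hm]
      simp [ENNReal.zero_rpow_of_pos hq0]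
  have hsnind : ∀ (s : Set ℕ) (f : ℕ → ℂ),
      eLpNorm (Set.indicator s f) p (wMeasure p ω)
        = (∑' m, Set.indicator s (fun m => w m * (‖f m‖₊ : ℝ≥0∞) ^ q) m) ^ (1/q) := by
    intro s f
    rw [hsn]
    congr 1
    exact tsum_congr (fun m => hind s f m)
  -- ‖y‖ > δ
  have hy : δ < ‖y‖ := by
    have h := h0
    rw [Metric.mem_closedBall, dist_zero_left] at h
    exact not_le.1 h
  have hofReal : ∀ v : Lp ℂ p (wMeasure p ω), eLpNorm (⇑v) p (wMeasure p ω) = ENNReal.ofReal ‖v‖ := by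
    intro v
    rw [Lp.norm_def, ENNReal.ofReal_toReal (Lp.eLpNorm_lt_top v).ne]
  have hey : ENNReal.ofReal δ < eLpNorm (⇑y) p (wMeasure p ω) := by
    rw [hofReal y]
    exact (ENNReal.ofReal_lt_ofReal_iff (hδ.trans hy)).2 hy
  have hSy : ENNReal.ofReal δ ^ q < ∑' m, w m * (‖(⇑y : ℕ → ℂ) m‖₊ : ℝ≥0∞) ^ q := by
    have h1 := ENNReal.rpow_lt_rpow hey hq0
    rwa [hsn, hrpowq] at h1
  obtain ⟨F, hF⟩ : ∃ F : Finset ℕ,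
      ENNReal.ofReal δ ^ q < ∑ m ∈ F, w m * (‖(⇑y : ℕ → ℂ) m‖₊ : ℝ≥0∞) ^ q := by
    rw [ENNReal.tsum_eq_iSup_sum] at hSy
    exact lt_iSup_iff.1 hSy
  have hFne : F.Nonempty := by
    rcases F.eq_empty_or_nonempty with rfl | h
    · simp at hF
    · exact h
  have hβeq : eLpNorm (Set.indicator (↑F) (⇑y : ℕ → ℂ)) p (wMeasure p ω) = ((∑ m ∈ F, w m * (‖(⇑y : ℕ → ℂ) m‖₊ : ℝ≥0∞) ^ q) ^ (1/q)) := by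
    rw [hsnind]
    congr 1
    rw [tsum_eq_sum (s := F) (fun b hb => Set.indicator_of_notMem (by simpa using hb) _)]
    exact Finset.sum_congr rfl fun m hm => Set.indicator_of_mem (by simpa using hm) _
  have hδβ : ENNReal.ofReal δ < ((∑ m ∈ F, w m * (‖(⇑y : ℕ → ℂ) m‖₊ : ℝ≥0∞) ^ q) ^ (1/q)) := by
    have h1 := ENNReal.rpow_lt_rpow hF (by positivity : (0:ℝ) < 1/q)
    rwa [hrpowq'] at h1
  have hβt : ((∑ m ∈ F, w m * (‖(⇑y : ℕ → ℂ) m‖₊ : ℝ≥0∞) ^ q) ^ (1/q)) ≠ ∞ := by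
    apply ENNReal.rpow_ne_top_of_nonneg (by positivity)
    exact (ENNReal.sum_lt_top.2 fun m _ => ENNReal.mul_lt_top (hwt m).lt_top
      ((ENNReal.rpow_ne_top_of_nonneg hq0.le ENNReal.coe_ne_top).lt_top)).ne
  have hγ0 : (((∑ m ∈ F, w m * (‖(⇑y : ℕ → ℂ) m‖₊ : ℝ≥0∞) ^ q) ^ (1/q)) - ENNReal.ofReal δ) ≠ 0 := (tsub_pos_of_lt hδβ).ne'
  have hγt : (((∑ m ∈ F, w m * (‖(⇑y : ℕ → ℂ) m‖₊ : ℝ≥0∞) ^ q) ^ (1/q)) - ENNReal.ofReal δ) ≠ ∞ := (tsub_le_self.trans_lt hβt.lt_top).ne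
  have hcard0 : (F.card : ℝ≥0∞) ≠ 0 := Nat.cast_ne_zero.2 (Finset.card_ne_zero.2 hFne)
  have hcardt : (F.card : ℝ≥0∞) ≠ ∞ := ENNReal.natCast_ne_top _
  have hγq0 : (((∑ m ∈ F, w m * (‖(⇑y : ℕ → ℂ) m‖₊ : ℝ≥0∞) ^ q) ^ (1/q)) - ENNReal.ofReal δ) ^ q ≠ 0 := (ENNReal.rpow_pos (zero_lt_iff.2 hγ0) hγt).ne'
  have hγqt : (((∑ m ∈ F, w m * (‖(⇑y : ℕ → ℂ) m‖₊ : ℝ≥0∞) ^ q) ^ (1/q)) - ENNReal.ofReal δ) ^ q ≠ ∞ := ENNReal.rpow_ne_top_of_nonneg hq0.le hγt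
  have hc00 : ((((∑ m ∈ F, w m * (‖(⇑y : ℕ → ℂ) m‖₊ : ℝ≥0∞) ^ q) ^ (1/q)) - ENNReal.ofReal δ) ^ q / (F.card : ℝ≥0∞)) ≠ 0 := by
    simp only [ne_eq, ENNReal.div_eq_zero_iff, not_or]
    exact ⟨hγq0, hcardt⟩
  have hc0t : ((((∑ m ∈ F, w m * (‖(⇑y : ℕ → ℂ) m‖₊ : ℝ≥0∞) ^ q) ^ (1/q)) - ENNReal.ofReal δ) ^ q / (F.card : ℝ≥0∞)) ≠ ∞ := (ENNReal.div_lt_top hγqt hcard0).ne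
  have hW0 : (∑ j ∈ F, w j) ≠ 0 := by
    obtain ⟨j0, hj0⟩ := hFne
    exact fun h => hw0 j0 (le_antisymm (h ▸ Finset.single_le_sum (f := w) (fun i _ => zero_le) hj0) zero_le)
  have hWt : (∑ j ∈ F, w j) ≠ ∞ := (ENNReal.sum_lt_top.2 fun m _ => (hwt m).lt_top).ne
  -- coordinates of powers of B
  have hcoord : ∀ (N : ℕ) (v : Lp ℂ p (wMeasure p ω)) (j : ℕ), (B ^ N) v j = v (j + N) := by
    intro N
    induction N with
    | zero => intro v j; rw [pow_zero]; rfl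
    | succ N ih =>
      intro v j
      rw [pow_succ, ContinuousLinearMap.mul_apply, ih (B v) j, hB v (j + N)]
      have hadd : j + N + 1 = j + (N + 1) := by omega
      rw [hadd]
  -- per-k coordinate estimate
  have hperk : ∀ k, ∃ j ∈ F, ((((∑ m ∈ F, w m * (‖(⇑y : ℕ → ℂ) m‖₊ : ℝ≥0∞) ^ q) ^ (1/q)) - ENNReal.ofReal δ) ^ q / (F.card : ℝ≥0∞)) ≤ w j * (‖(⇑(x k) : ℕ → ℂ) (j + n k)‖₊ : ℝ≥0∞) ^ q := by
    intro k
    have huy : eLpNorm (⇑((B ^ n k) (x k)) - ⇑y) p (wMeasure p ω) ≤ ENNReal.ofReal δ := by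
      have h3 : (⇑((B ^ n k) (x k)) : ℕ → ℂ) - ⇑y = ⇑((B ^ n k) (x k) - y) :=
        (hae _ _ (Lp.coeFn_sub _ _)).symm
      rw [h3, hofReal]
      exact ENNReal.ofReal_le_ofReal (hball k).le
    have htri : ((∑ m ∈ F, w m * (‖(⇑y : ℕ → ℂ) m‖₊ : ℝ≥0∞) ^ q) ^ (1/q)) ≤ eLpNorm (Set.indicator (↑F) (⇑((B ^ n k) (x k)) : ℕ → ℂ)) p (wMeasure p ω) + ENNReal.ofReal δ := by
      rw [← hβeq]
      have h2 := eLpNorm_add_le (μ := wMeasure p ω) (p := p)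
        (hmeas (Set.indicator (↑F) (⇑y : ℕ → ℂ) - Set.indicator (↑F) (⇑((B ^ n k) (x k)) : ℕ → ℂ)))
        (hmeas (Set.indicator (↑F) (⇑((B ^ n k) (x k)) : ℕ → ℂ))) hp1
      rw [sub_add_cancel] at h2
      refine h2.trans ?_
      rw [add_comm]
      refine add_le_add_right ?_ _
      have h3 : Set.indicator (↑F) (⇑y : ℕ → ℂ) - Set.indicator (↑F) (⇑((B ^ n k) (x k)) : ℕ → ℂ)
          = Set.indicator (↑F) ((⇑y : ℕ → ℂ) - ⇑((B ^ n k) (x k))) := by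
        funext m
        by_cases hm : m ∈ (↑F : Set ℕ) <;>
          simp [Set.indicator_of_mem, Set.indicator_of_notMem, hm]
      rw [h3]
      calc eLpNorm (Set.indicator (↑F) ((⇑y : ℕ → ℂ) - ⇑((B ^ n k) (x k)))) p (wMeasure p ω)
          ≤ eLpNorm ((⇑y : ℕ → ℂ) - ⇑((B ^ n k) (x k))) p (wMeasure p ω) :=
            eLpNorm_mono (fun m => norm_indicator_le_norm_self _ m)
        _ ≤ ENNReal.ofReal δ := by
            rw [show (⇑y : ℕ → ℂ) - ⇑((B ^ n k) (x k))
                = -((⇑((B ^ n k) (x k)) : ℕ → ℂ) - ⇑y) by ring, eLpNorm_neg]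
            exact huy
    have hsum : (((∑ m ∈ F, w m * (‖(⇑y : ℕ → ℂ) m‖₊ : ℝ≥0∞) ^ q) ^ (1/q)) - ENNReal.ofReal δ) ^ q ≤ ∑ j ∈ F, w j * (‖(⇑((B ^ n k) (x k)) : ℕ → ℂ) j‖₊ : ℝ≥0∞) ^ q := by
      have h4 := ENNReal.rpow_le_rpow (tsub_le_iff_right.2 htri) hq0.le
      rw [hsnind, hrpowq,
        tsum_eq_sum (s := F) (fun b hb => Set.indicator_of_notMem (by simpa using hb) _)] at h4
      exact h4.trans_eq (Finset.sum_congr rfl fun j hj => Set.indicator_of_mem (by simpa using hj) _)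
    obtain ⟨j, hjF, hjmax⟩ := F.exists_max_image
      (fun j => w j * (‖(⇑((B ^ n k) (x k)) : ℕ → ℂ) j‖₊ : ℝ≥0∞) ^ q) hFne
    refine ⟨j, hjF, ?_⟩
    have h8 := hsum.trans ((Finset.sum_le_card_nsmul F _ _ (fun i hi => hjmax i hi)).trans_eq
      (nsmul_eq_mul _ _))
    rw [hcoord (n k) (x k) j] at h8
    rw [← hcoord (n k) (x k) j, hcoord (n k) (x k) j]
    refine (ENNReal.div_le_iff hcard0 hcardt).2 ?_
    rw [mul_comm]
    exact h8
  -- tail machinery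
  have hTl_term : ∀ (v : ℕ → ℂ) (N m : ℕ), N ≤ m →
      w m * (‖v m‖₊ : ℝ≥0∞) ^ q ≤ (eLpNorm (Set.indicator {m' : ℕ | N ≤ m'} (v)) p (wMeasure p ω)) ^ q := by
    intro v N m hm
    rw [hsnind, hrpowq]
    exact le_trans (le_of_eq
      (Set.indicator_of_mem (show m ∈ {m' : ℕ | N ≤ m'} from hm)
        (fun m' => w m' * (‖v m'‖₊ : ℝ≥0∞) ^ q)).symm) (ENNReal.le_tsum m)
  have hTl_anti : ∀ (v : ℕ → ℂ) (N N' : ℕ), N ≤ N' →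
      eLpNorm (Set.indicator {m' : ℕ | N' ≤ m'} (v)) p (wMeasure p ω) ≤ eLpNorm (Set.indicator {m' : ℕ | N ≤ m'} (v)) p (wMeasure p ω) := by
    intro v N N' hNN'
    refine eLpNorm_mono fun m => ?_
    by_cases hm : N' ≤ m
    · rw [Set.indicator_of_mem (show m ∈ {m' : ℕ | N' ≤ m'} from hm),
          Set.indicator_of_mem (show m ∈ {m' : ℕ | N ≤ m'} from hNN'.trans hm)]
    · rw [Set.indicator_of_notMem (show m ∉ {m' : ℕ | N' ≤ m'} from hm)]
      simp
  have hTl_le : ∀ (N : ℕ) (f g : ℕ → ℂ),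
      eLpNorm (Set.indicator {m' : ℕ | N ≤ m'} (f)) p (wMeasure p ω) ≤ eLpNorm (f - g) p (wMeasure p ω) + eLpNorm (Set.indicator {m' : ℕ | N ≤ m'} (g)) p (wMeasure p ω) := by
    intro N f g
    have h2 := eLpNorm_add_le (μ := wMeasure p ω) (p := p)
      (hmeas (Set.indicator {m' : ℕ | N ≤ m'} (f) - Set.indicator {m' : ℕ | N ≤ m'} (g))) (hmeas (Set.indicator {m' : ℕ | N ≤ m'} (g))) hp1
    rw [sub_add_cancel] at h2
    refine h2.trans (add_le_add_left ?_ _)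
    have h3 : Set.indicator {m' : ℕ | N ≤ m'} (f) - Set.indicator {m' : ℕ | N ≤ m'} (g) = Set.indicator {m' : ℕ | N ≤ m'} (f - g) := by
      funext m
      by_cases hm : m ∈ {m' : ℕ | N ≤ m'} <;>
        simp [Set.indicator_of_mem, Set.indicator_of_notMem, hm]
    rw [h3]
    exact eLpNorm_mono fun m => norm_indicator_le_norm_self _ m
  have hz_tail : ∀ ε : ℝ≥0∞, 0 < ε → ε ≠ ∞ → ∃ N0 : ℕ, eLpNorm (Set.indicator {m' : ℕ | N0 ≤ m'} (⇑z : ℕ → ℂ)) p (wMeasure p ω) < ε := by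
    intro ε hε hεt
    have hne : (∑' m, w m * (‖(⇑z : ℕ → ℂ) m‖₊ : ℝ≥0∞) ^ q) ≠ ∞ := by
      intro hcon
      have h2 := hsn (⇑z : ℕ → ℂ)
      rw [hcon, ENNReal.top_rpow_of_pos (by positivity)] at h2
      exact (Lp.eLpNorm_lt_top z).ne h2
    have hkey : ∀ N : ℕ, eLpNorm (Set.indicator {m' : ℕ | N ≤ m'} (⇑z : ℕ → ℂ)) p (wMeasure p ω)
        = (∑' i, w (i + N) * (‖(⇑z : ℕ → ℂ) (i + N)‖₊ : ℝ≥0∞) ^ q) ^ (1/q) := by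
      intro N
      rw [hsnind]
      congr 1
      have h1 : ∀ i : ℕ, w (i + N) * (‖(⇑z : ℕ → ℂ) (i + N)‖₊ : ℝ≥0∞) ^ q
          = Set.indicator {m' : ℕ | N ≤ m'}
              (fun m' => w m' * (‖(⇑z : ℕ → ℂ) m'‖₊ : ℝ≥0∞) ^ q) (i + N) :=
        fun i => (Set.indicator_of_mem (show i + N ∈ {m' : ℕ | N ≤ m'} from Nat.le_add_left N i)
          (fun m' => w m' * (‖(⇑z : ℕ → ℂ) m'‖₊ : ℝ≥0∞) ^ q)).symm
      rw [tsum_congr h1]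
      refine (Function.Injective.tsum_eq (g := fun i : ℕ => i + N) (add_left_injective N) ?_).symm
      intro m hm
      rw [Function.mem_support] at hm
      rcases le_or_gt N m with h | h
      · exact ⟨m - N, show m - N + N = m by omega⟩
      · exact absurd (Set.indicator_of_notMem (by simpa using h.not_ge) _) hm
    have htt := ENNReal.tendsto_sum_nat_add (fun m => w m * (‖(⇑z : ℕ → ℂ) m‖₊ : ℝ≥0∞) ^ q) hne
    have hεq : (0 : ℝ≥0∞) < ε ^ q := ENNReal.rpow_pos hε hεt
    obtain ⟨N0, hN0⟩ := (htt.eventually_lt_const hεq).exists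
    refine ⟨N0, ?_⟩
    rw [hkey N0]
    have h5 := ENNReal.rpow_lt_rpow hN0 (by positivity : (0:ℝ) < 1/q)
    rwa [hrpowq'] at h5
  -- convergence of x k to z in eLpNorm
  have hxz : ∀ ε : ℝ≥0∞, 0 < ε → ε ≠ ∞ → ∃ K : ℕ, ∀ k, K ≤ k →
      eLpNorm ((⇑(x k) : ℕ → ℂ) - ⇑z) p (wMeasure p ω) < ε := by
    intro ε hε hεt
    obtain ⟨K, hK⟩ := Metric.tendsto_atTop.1 hconv ε.toReal (ENNReal.toReal_pos hε.ne' hεt)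
    refine ⟨K, fun k hk => ?_⟩
    have h2 := hK k hk
    rw [dist_eq_norm] at h2
    have h3 : (⇑(x k) : ℕ → ℂ) - ⇑z = ⇑(x k - z) := (hae _ _ (Lp.coeFn_sub _ _)).symm
    rw [h3, hofReal]
    exact (ENNReal.ofReal_lt_iff_lt_toReal (norm_nonneg _) hεt).2 h2
  -- main frequential smallness of ω
  have main : ∀ ε : ℝ, 0 < ε → ∀ M : ℕ, ∃ m, M ≤ m ∧ ω m ≤ ε := by
    intro ε hε M
    have hρ0 : (((((∑ m ∈ F, w m * (‖(⇑y : ℕ → ℂ) m‖₊ : ℝ≥0∞) ^ q) ^ (1/q)) - ENNReal.ofReal δ) ^ q / (F.card : ℝ≥0∞)) * ENNReal.ofReal (ε ^ q) / (∑ j ∈ F, w j)) ≠ 0 := by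
      rw [ne_eq, ENNReal.div_eq_zero_iff, not_or]
      refine ⟨?_, hWt⟩
      rw [mul_eq_zero, not_or]
      exact ⟨hc00, fun h =>
        absurd (ENNReal.ofReal_eq_zero.1 h) (not_le.2 (Real.rpow_pos_of_pos hε q))⟩
    have hρt : (((((∑ m ∈ F, w m * (‖(⇑y : ℕ → ℂ) m‖₊ : ℝ≥0∞) ^ q) ^ (1/q)) - ENNReal.ofReal δ) ^ q / (F.card : ℝ≥0∞)) * ENNReal.ofReal (ε ^ q) / (∑ j ∈ F, w j)) ≠ ∞ :=
      (ENNReal.div_lt_top (ENNReal.mul_ne_top hc0t ENNReal.ofReal_ne_top) hW0).ne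
    have hσ0 : ((((((∑ m ∈ F, w m * (‖(⇑y : ℕ → ℂ) m‖₊ : ℝ≥0∞) ^ q) ^ (1/q)) - ENNReal.ofReal δ) ^ q / (F.card : ℝ≥0∞)) * ENNReal.ofReal (ε ^ q) / (∑ j ∈ F, w j)) ^ (1/q)) ≠ 0 := (ENNReal.rpow_pos (zero_lt_iff.2 hρ0) hρt).ne'
    have hσt : ((((((∑ m ∈ F, w m * (‖(⇑y : ℕ → ℂ) m‖₊ : ℝ≥0∞) ^ q) ^ (1/q)) - ENNReal.ofReal δ) ^ q / (F.card : ℝ≥0∞)) * ENNReal.ofReal (ε ^ q) / (∑ j ∈ F, w j)) ^ (1/q)) ≠ ∞ := ENNReal.rpow_ne_top_of_nonneg (by positivity) hρt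
    have hσ20 : (0:ℝ≥0∞) < ((((((∑ m ∈ F, w m * (‖(⇑y : ℕ → ℂ) m‖₊ : ℝ≥0∞) ^ q) ^ (1/q)) - ENNReal.ofReal δ) ^ q / (F.card : ℝ≥0∞)) * ENNReal.ofReal (ε ^ q) / (∑ j ∈ F, w j)) ^ (1/q)) / 2 := ENNReal.half_pos hσ0
    have hσ2t : ((((((∑ m ∈ F, w m * (‖(⇑y : ℕ → ℂ) m‖₊ : ℝ≥0∞) ^ q) ^ (1/q)) - ENNReal.ofReal δ) ^ q / (F.card : ℝ≥0∞)) * ENNReal.ofReal (ε ^ q) / (∑ j ∈ F, w j)) ^ (1/q)) / 2 ≠ ∞ := ((ENNReal.half_le_self).trans_lt hσt.lt_top).ne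
    obtain ⟨K, hK⟩ := hxz (((((((∑ m ∈ F, w m * (‖(⇑y : ℕ → ℂ) m‖₊ : ℝ≥0∞) ^ q) ^ (1/q)) - ENNReal.ofReal δ) ^ q / (F.card : ℝ≥0∞)) * ENNReal.ofReal (ε ^ q) / (∑ j ∈ F, w j)) ^ (1/q)) / 2) hσ20 hσ2t
    obtain ⟨N0, hN0⟩ := hz_tail (((((((∑ m ∈ F, w m * (‖(⇑y : ℕ → ℂ) m‖₊ : ℝ≥0∞) ^ q) ^ (1/q)) - ENNReal.ofReal δ) ^ q / (F.card : ℝ≥0∞)) * ENNReal.ofReal (ε ^ q) / (∑ j ∈ F, w j)) ^ (1/q)) / 2) hσ20 hσ2t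
    set k := max M (max K N0) with hkdef
    have hkM : M ≤ k := le_max_left _ _
    have hkK : K ≤ k := (le_max_left _ _).trans (le_max_right _ _)
    have hkN0 : N0 ≤ k := (le_max_right _ _).trans (le_max_right _ _)
    have hknk : k ≤ n k := hn.le_apply
    obtain ⟨j, hjF, hj⟩ := hperk k
    refine ⟨j + n k, by omega, ?_⟩
    -- tail estimate
    have hT : eLpNorm (Set.indicator {m' : ℕ | n k ≤ m'} (⇑(x k) : ℕ → ℂ)) p (wMeasure p ω) ≤ ((((((∑ m ∈ F, w m * (‖(⇑y : ℕ → ℂ) m‖₊ : ℝ≥0∞) ^ q) ^ (1/q)) - ENNReal.ofReal δ) ^ q / (F.card : ℝ≥0∞)) * ENNReal.ofReal (ε ^ q) / (∑ j ∈ F, w j)) ^ (1/q)) := by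
      refine (hTl_le (n k) (⇑(x k) : ℕ → ℂ) (⇑z : ℕ → ℂ)).trans ?_
      have t2 : eLpNorm ((⇑(x k) : ℕ → ℂ) - ⇑z) p (wMeasure p ω) ≤ ((((((∑ m ∈ F, w m * (‖(⇑y : ℕ → ℂ) m‖₊ : ℝ≥0∞) ^ q) ^ (1/q)) - ENNReal.ofReal δ) ^ q / (F.card : ℝ≥0∞)) * ENNReal.ofReal (ε ^ q) / (∑ j ∈ F, w j)) ^ (1/q)) / 2 := (hK k hkK).le
      have t3 : eLpNorm (Set.indicator {m' : ℕ | n k ≤ m'} (⇑z : ℕ → ℂ)) p (wMeasure p ω) ≤ ((((((∑ m ∈ F, w m * (‖(⇑y : ℕ → ℂ) m‖₊ : ℝ≥0∞) ^ q) ^ (1/q)) - ENNReal.ofReal δ) ^ q / (F.card : ℝ≥0∞)) * ENNReal.ofReal (ε ^ q) / (∑ j ∈ F, w j)) ^ (1/q)) / 2 :=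
        (hTl_anti (⇑z : ℕ → ℂ) N0 (n k) (hkN0.trans hknk)).trans hN0.le
      calc eLpNorm ((⇑(x k) : ℕ → ℂ) - ⇑z) p (wMeasure p ω) + eLpNorm (Set.indicator {m' : ℕ | n k ≤ m'} (⇑z : ℕ → ℂ)) p (wMeasure p ω)
          ≤ ((((((∑ m ∈ F, w m * (‖(⇑y : ℕ → ℂ) m‖₊ : ℝ≥0∞) ^ q) ^ (1/q)) - ENNReal.ofReal δ) ^ q / (F.card : ℝ≥0∞)) * ENNReal.ofReal (ε ^ q) / (∑ j ∈ F, w j)) ^ (1/q)) / 2 + ((((((∑ m ∈ F, w m * (‖(⇑y : ℕ → ℂ) m‖₊ : ℝ≥0∞) ^ q) ^ (1/q)) - ENNReal.ofReal δ) ^ q / (F.card : ℝ≥0∞)) * ENNReal.ofReal (ε ^ q) / (∑ j ∈ F, w j)) ^ (1/q)) / 2 := add_le_add t2 t3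
        _ = ((((((∑ m ∈ F, w m * (‖(⇑y : ℕ → ℂ) m‖₊ : ℝ≥0∞) ^ q) ^ (1/q)) - ENNReal.ofReal δ) ^ q / (F.card : ℝ≥0∞)) * ENNReal.ofReal (ε ^ q) / (∑ j ∈ F, w j)) ^ (1/q)) := ENNReal.add_halves _
    have hTq : (eLpNorm (Set.indicator {m' : ℕ | n k ≤ m'} (⇑(x k) : ℕ → ℂ)) p (wMeasure p ω)) ^ q ≤ (((((∑ m ∈ F, w m * (‖(⇑y : ℕ → ℂ) m‖₊ : ℝ≥0∞) ^ q) ^ (1/q)) - ENNReal.ofReal δ) ^ q / (F.card : ℝ≥0∞)) * ENNReal.ofReal (ε ^ q) / (∑ j ∈ F, w j)) := by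
      have h5 := ENNReal.rpow_le_rpow hT hq0.le
      rwa [hrpowq] at h5
    have hterm : w (j + n k) * (‖(⇑(x k) : ℕ → ℂ) (j + n k)‖₊ : ℝ≥0∞) ^ q ≤ (((((∑ m ∈ F, w m * (‖(⇑y : ℕ → ℂ) m‖₊ : ℝ≥0∞) ^ q) ^ (1/q)) - ENNReal.ofReal δ) ^ q / (F.card : ℝ≥0∞)) * ENNReal.ofReal (ε ^ q) / (∑ j ∈ F, w j)) :=
      (hTl_term (⇑(x k) : ℕ → ℂ) (n k) (j + n k) (Nat.le_add_left _ _)).trans hTq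
    -- combine
    have h7 : ((((∑ m ∈ F, w m * (‖(⇑y : ℕ → ℂ) m‖₊ : ℝ≥0∞) ^ q) ^ (1/q)) - ENNReal.ofReal δ) ^ q / (F.card : ℝ≥0∞)) * w (j + n k) ≤ (∑ j ∈ F, w j) * (((((∑ m ∈ F, w m * (‖(⇑y : ℕ → ℂ) m‖₊ : ℝ≥0∞) ^ q) ^ (1/q)) - ENNReal.ofReal δ) ^ q / (F.card : ℝ≥0∞)) * ENNReal.ofReal (ε ^ q) / (∑ j ∈ F, w j)) := by
      calc ((((∑ m ∈ F, w m * (‖(⇑y : ℕ → ℂ) m‖₊ : ℝ≥0∞) ^ q) ^ (1/q)) - ENNReal.ofReal δ) ^ q / (F.card : ℝ≥0∞)) * w (j + n k)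
          ≤ (w j * (‖(⇑(x k) : ℕ → ℂ) (j + n k)‖₊ : ℝ≥0∞) ^ q) * w (j + n k) :=
            mul_le_mul_left hj _
        _ = w j * (w (j + n k) * (‖(⇑(x k) : ℕ → ℂ) (j + n k)‖₊ : ℝ≥0∞) ^ q) := by ring
        _ ≤ w j * (((((∑ m ∈ F, w m * (‖(⇑y : ℕ → ℂ) m‖₊ : ℝ≥0∞) ^ q) ^ (1/q)) - ENNReal.ofReal δ) ^ q / (F.card : ℝ≥0∞)) * ENNReal.ofReal (ε ^ q) / (∑ j ∈ F, w j)) := mul_le_mul_right hterm _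
        _ ≤ (∑ j ∈ F, w j) * (((((∑ m ∈ F, w m * (‖(⇑y : ℕ → ℂ) m‖₊ : ℝ≥0∞) ^ q) ^ (1/q)) - ENNReal.ofReal δ) ^ q / (F.card : ℝ≥0∞)) * ENNReal.ofReal (ε ^ q) / (∑ j ∈ F, w j)) :=
            mul_le_mul_left (Finset.single_le_sum (f := w) (fun i _ => zero_le) hjF) _
    have h8 : (∑ j ∈ F, w j) * (((((∑ m ∈ F, w m * (‖(⇑y : ℕ → ℂ) m‖₊ : ℝ≥0∞) ^ q) ^ (1/q)) - ENNReal.ofReal δ) ^ q / (F.card : ℝ≥0∞)) * ENNReal.ofReal (ε ^ q) / (∑ j ∈ F, w j)) = ((((∑ m ∈ F, w m * (‖(⇑y : ℕ → ℂ) m‖₊ : ℝ≥0∞) ^ q) ^ (1/q)) - ENNReal.ofReal δ) ^ q / (F.card : ℝ≥0∞)) * ENNReal.ofReal (ε ^ q) := ENNReal.mul_div_cancel hW0 hWt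
    rw [h8] at h7
    have h9 : w (j + n k) ≤ ENNReal.ofReal (ε ^ q) := by
      rwa [ENNReal.mul_le_mul_iff_right hc00 hc0t] at h7
    have h10 : ω (j + n k) ^ q ≤ ε ^ q :=
      (ENNReal.ofReal_le_ofReal_iff (by positivity)).1 h9
    exact (Real.rpow_le_rpow_iff (hω _).le hε.le hq0).1 h10
  -- conclude about the liminf
  have hfreq : ∀ ε : ℝ, 0 < ε → ∃ᶠ m in atTop, ω m ≤ ε := by
    intro ε hε
    refine frequently_atTop.2 fun M => ?_
    obtain ⟨m, hm1, hm2⟩ := main ε hε M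
    exact ⟨m, hm1, hm2⟩
  have hbddb : IsBoundedUnder (· ≥ ·) atTop ω := isBoundedUnder_of ⟨0, fun m => (hω m).le⟩
  have h_le : liminf ω atTop ≤ 0 := by
    by_contra hcon
    push_neg at hcon
    have h1 := liminf_le_of_frequently_le (hfreq (liminf ω atTop / 2) (by linarith)) hbddb
    linarith
  have h_ge : (0:ℝ) ≤ liminf ω atTop := by
    refine le_liminf_of_le (IsCoboundedUnder.of_frequently_le (a := 1) (hfreq 1 one_pos)) ?_
    exact Eventually.of_forall fun m => (hω m).le
  linarith

end
end

section
/- Let B be the bilateral backward shift on ℓ^p(ℤ, ω) with sup_{n∈ℤ} ω_n/ω_{n+1} < ∞. Suppose x, y ∈ ℓ^p(ℤ, ω), y_{k_0} ≠ 0, λ_i ∈ ℂ \ {0}, n_i strictly increasing, and ‖λ_i B^{n_i} x − y‖ < δ_i where δ_i → 0 and δ_i < ω_{k_0}|y_{k_0}|/2 for all i. Then for each fixed i, (|λ_j|/|λ_i|) · ω_{−n_j + n_i + k_0} → 0 as j → ∞. -/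
open MeasureTheory Filter Topology
open scoped ENNReal

noncomputable section

namespace Stmt12Aux

lemma lint_eq (p : ENNReal) (ω : ℤ → ℝ) (f : ℤ → ℂ) :
    ∫⁻ a, (‖f a‖₊ : ℝ≥0∞) ^ p.toReal ∂(wMeasure p ω)
      = ∑' k : ℤ, ENNReal.ofReal (ω k ^ p.toReal) * (‖f k‖₊ : ℝ≥0∞) ^ p.toReal := by
  rw [wMeasure, lintegral_sum_measure]
  congr 1; ext k
  rw [lintegral_smul_measure, lintegral_dirac, smul_eq_mul]

lemma term_rpow {p : ENNReal} {ω : ℤ → ℝ} {k : ℤ} (hpt : 0 < p.toReal) (hωk : 0 < ω k)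
    (c : ℂ) :
    (ENNReal.ofReal (ω k ^ p.toReal) * (‖c‖₊ : ℝ≥0∞) ^ p.toReal) ^ (1 / p.toReal)
      = ENNReal.ofReal (ω k) * (‖c‖₊ : ℝ≥0∞) := by
  rw [← ENNReal.ofReal_rpow_of_pos hωk, ← ENNReal.mul_rpow_of_nonneg _ _ hpt.le,
    ← ENNReal.rpow_mul, mul_one_div, div_self hpt.ne', ENNReal.rpow_one]

lemma eval_le_norm {p : ENNReal} [Fact (1 ≤ p)] (hp0 : p ≠ 0) (hp : p ≠ ∞) {ω : ℤ → ℝ}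
    (hω : ∀ k, 0 < ω k) (z : Lp ℂ p (wMeasure p ω)) (k : ℤ) :
    ω k * ‖(z : ℤ → ℂ) k‖ ≤ ‖z‖ := by
  have hpt : 0 < p.toReal := ENNReal.toReal_pos hp0 hp
  have h1 : eLpNorm (z : ℤ → ℂ) p (wMeasure p ω)
      = (∑' j : ℤ, ENNReal.ofReal (ω j ^ p.toReal)
          * (‖(z : ℤ → ℂ) j‖₊ : ℝ≥0∞) ^ p.toReal) ^ (1 / p.toReal) := by
    rw [eLpNorm_eq_lintegral_rpow_enorm_toReal hp0 hp]; simp only [enorm_eq_nnnorm]; rw [lint_eq]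
  have h2 : ENNReal.ofReal (ω k) * (‖(z : ℤ → ℂ) k‖₊ : ℝ≥0∞)
      ≤ eLpNorm (z : ℤ → ℂ) p (wMeasure p ω) := by
    rw [h1, ← term_rpow hpt (hω k)]
    exact ENNReal.rpow_le_rpow (ENNReal.le_tsum k) (by positivity)
  have h3 := ENNReal.toReal_mono (Lp.eLpNorm_lt_top z).ne h2
  rw [Lp.norm_def]
  refine le_trans (le_of_eq ?_) h3
  rw [ENNReal.toReal_mul, ENNReal.toReal_ofReal (hω k).le, ENNReal.coe_toReal, coe_nnnorm]

lemma ae_eq_all {p : ENNReal} {ω : ℤ → ℝ} (hω : ∀ k, 0 < ω k) {f g : ℤ → ℂ}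
    (h : f =ᵐ[wMeasure p ω] g) (k : ℤ) : f k = g k := by
  by_contra hne
  have hsub : ({k} : Set ℤ) ⊆ {a | f a = g a}ᶜ := by
    intro a ha
    simp only [Set.mem_singleton_iff] at ha
    subst ha; exact hne
  have hzero : wMeasure p ω {k} = 0 := measure_mono_null hsub h
  have hge : ENNReal.ofReal (ω k ^ p.toReal) ≤ wMeasure p ω {k} := by
    rw [wMeasure, Measure.sum_apply _ (measurableSet_singleton k)]
    calc ENNReal.ofReal (ω k ^ p.toReal)
        = (ENNReal.ofReal (ω k ^ p.toReal) • Measure.dirac k) ({k} : Set ℤ) := by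
          simp [Measure.dirac_apply]
      _ ≤ _ := ENNReal.le_tsum k
  rw [hzero, nonpos_iff_eq_zero, ENNReal.ofReal_eq_zero] at hge
  exact absurd hge (not_le.mpr (Real.rpow_pos_of_pos (hω k) _))

lemma pow_apply {p : ENNReal} [Fact (1 ≤ p)] {ω : ℤ → ℝ}
    (B : Lp ℂ p (wMeasure p ω) →L[ℂ] Lp ℂ p (wMeasure p ω))
    (hB : ∀ (x : Lp ℂ p (wMeasure p ω)) (k : ℤ), B x k = x (k + 1)) :
    ∀ (m : ℕ) (x : Lp ℂ p (wMeasure p ω)) (k : ℤ), ((B ^ m) x : ℤ → ℂ) k = x (k + m) := by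
  intro m
  induction m with
  | zero => intro x k; simp
  | succ m ih =>
    intro x k
    rw [pow_succ, ContinuousLinearMap.mul_apply, ih (B x) k, hB]
    congr 1
    push_cast
    ring

end Stmt12Aux

/-- under the approximation `‖λ_i • B ^ (n_i) x − y‖ < δ_i` with `δ_i → 0`
and `δ_i < ω k₀ * |y k₀| / 2`, for each fixed `i` one has
`(|λ_j| / |λ_i|) * ω (−n_j + n_i + k₀) → 0` as `j → ∞`. -/
theorem stmt12 (p : ENNReal) [Fact (1 ≤ p)] (hp : p ≠ ∞) (ω : ℤ → ℝ) (hω : ∀ k, 0 < ω k)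
    (hbdd : ∃ C : ℝ, ∀ k : ℤ, ω k / ω (k + 1) ≤ C)
    (B : Lp ℂ p (wMeasure p ω) →L[ℂ] Lp ℂ p (wMeasure p ω))
    (hB : ∀ (x : Lp ℂ p (wMeasure p ω)) (k : ℤ), B x k = x (k + 1))
    (x y : Lp ℂ p (wMeasure p ω)) (k₀ : ℤ) (hk₀ : y k₀ ≠ 0)
    (lam : ℕ → ℂ) (hlam : ∀ i, lam i ≠ 0)
    (n : ℕ → ℕ) (hn : StrictMono n)
    (δ : ℕ → ℝ) (hδ0 : Tendsto δ atTop (nhds 0))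
    (hδsmall : ∀ i, δ i < ω k₀ * ‖y k₀‖ / 2)
    (happrox : ∀ i, ‖lam i • (B ^ n i) x - y‖ < δ i) :
    ∀ i : ℕ, Tendsto
      (fun j => ‖lam j‖ / ‖lam i‖ *
        ω (-(n j : ℤ) + (n i : ℤ) + k₀)) atTop (nhds 0) := by
  intro i
  have hp0 : p ≠ 0 := by
    have h1 : (1 : ENNReal) ≤ p := Fact.out
    intro h; rw [h] at h1; exact absurd h1 (by simp)
  have hpt : 0 < p.toReal := ENNReal.toReal_pos hp0 hp
  -- pointwise formula for the approximants
  have hcoef : ∀ (j : ℕ) (k : ℤ),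
      ((lam j • (B ^ n j) x - y : Lp ℂ p (wMeasure p ω)) : ℤ → ℂ) k
        = lam j * (x : ℤ → ℂ) (k + n j) - (y : ℤ → ℂ) k := by
    intro j k
    have hae : ((lam j • (B ^ n j) x - y : Lp ℂ p (wMeasure p ω)) : ℤ → ℂ)
        =ᵐ[wMeasure p ω] (lam j • (((B ^ n j) x : Lp ℂ p (wMeasure p ω)) : ℤ → ℂ)
          - (y : ℤ → ℂ)) :=
      (Lp.coeFn_sub _ _).trans ((Lp.coeFn_smul _ _).sub (Filter.EventuallyEq.refl _ _))
    have h := Stmt12Aux.ae_eq_all hω hae k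
    rw [h, Pi.sub_apply, Pi.smul_apply, smul_eq_mul, Stmt12Aux.pow_apply B hB]
  -- evaluation bound
  have hev : ∀ (j : ℕ) (k : ℤ),
      ω k * ‖lam j * (x : ℤ → ℂ) (k + n j) - (y : ℤ → ℂ) k‖ < δ j := by
    intro j k
    calc ω k * ‖lam j * (x : ℤ → ℂ) (k + n j) - (y : ℤ → ℂ) k‖
        = ω k * ‖((lam j • (B ^ n j) x - y : Lp ℂ p (wMeasure p ω)) : ℤ → ℂ) k‖ := by
          rw [hcoef]
      _ ≤ ‖lam j • (B ^ n j) x - y‖ := Stmt12Aux.eval_le_norm hp0 hp hω _ k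
      _ < δ j := happrox j
  set X : ℂ := (x : ℤ → ℂ) (k₀ + n i) with hXdef
  set Y : ℂ := (y : ℤ → ℂ) k₀ with hYdef
  have hYpos : 0 < ‖Y‖ := norm_pos_iff.mpr hk₀
  have hlami : 0 < ‖lam i‖ := norm_pos_iff.mpr (hlam i)
  -- lower bound on X
  have hXlow : ‖Y‖ / 2 ≤ ‖lam i‖ * ‖X‖ := by
    have h1 := hev i k₀
    have h2 := hδsmall i
    have h3 : ω k₀ * ‖lam i * X - Y‖ < ω k₀ * ‖Y‖ / 2 := h1.trans h2
    have h4 : ‖lam i * X - Y‖ < ‖Y‖ / 2 := by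
      have := (mul_lt_mul_iff_right₀ (hω k₀)).mp (by linarith : ω k₀ * ‖lam i * X - Y‖ <
        ω k₀ * (‖Y‖ / 2))
      exact this
    have h5 : ‖Y‖ - ‖lam i * X‖ ≤ ‖lam i * X - Y‖ := by
      have := norm_sub_norm_le (lam i * X) Y
      have h6 := abs_norm_sub_norm_le (lam i * X) Y
      calc ‖Y‖ - ‖lam i * X‖ ≤ |‖lam i * X‖ - ‖Y‖| := by
            rw [abs_sub_comm]; exact le_abs_self _
        _ ≤ ‖lam i * X - Y‖ := h6
    rw [norm_mul] at h5
    linarith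
  set m : ℕ → ℤ := fun j => -(n j : ℤ) + (n i : ℤ) + k₀ with hmdef
  set t : ℕ → ℝ := fun j => ω (m j) * ‖(y : ℤ → ℂ) (m j)‖ with htdef
  have htnonneg : ∀ j, 0 ≤ t j := fun j => mul_nonneg (hω _).le (norm_nonneg _)
  -- the main estimate
  have hkey : ∀ j, ω (m j) * (‖lam j‖ * ‖X‖) ≤ δ j + t j := by
    intro j
    have h1 := hev j (m j)
    have hidx : m j + (n j : ℤ) = k₀ + (n i : ℤ) := by simp [hmdef]; ring
    rw [hidx] at h1
    have h2 : ω (m j) * ‖lam j * X‖ ≤ ω (m j) * ‖lam j * X - (y : ℤ → ℂ) (m j)‖ + t j := by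
      have := norm_sub_norm_le (lam j * X - (y : ℤ → ℂ) (m j)) (-(y : ℤ → ℂ) (m j))
      have h3 : ‖lam j * X‖ ≤ ‖lam j * X - (y : ℤ → ℂ) (m j)‖ + ‖(y : ℤ → ℂ) (m j)‖ := by
        calc ‖lam j * X‖ = ‖(lam j * X - (y : ℤ → ℂ) (m j)) + (y : ℤ → ℂ) (m j)‖ := by
              ring_nf
          _ ≤ _ := norm_add_le _ _
      calc ω (m j) * ‖lam j * X‖
          ≤ ω (m j) * (‖lam j * X - (y : ℤ → ℂ) (m j)‖ + ‖(y : ℤ → ℂ) (m j)‖) :=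
            mul_le_mul_of_nonneg_left h3 (hω _).le
        _ = _ := by rw [mul_add]
    rw [norm_mul] at h2
    linarith
  -- tail of y tends to zero
  have htail : Tendsto t atTop (nhds 0) := by
    have hfin : ∑' k : ℤ, ENNReal.ofReal (ω k ^ p.toReal)
        * (‖(y : ℤ → ℂ) k‖₊ : ℝ≥0∞) ^ p.toReal ≠ ∞ := by
      have h := Lp.eLpNorm_lt_top y
      rw [eLpNorm_eq_lintegral_rpow_enorm_toReal hp0 hp] at h; simp only [enorm_eq_nnnorm] at h
      rw [Stmt12Aux.lint_eq] at h
      intro hcontra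
      rw [hcontra, ENNReal.top_rpow_of_pos (by positivity)] at h
      exact lt_irrefl _ h
    have hcof := ENNReal.tendsto_cofinite_zero_of_tsum_ne_top hfin
    have hminj : Function.Injective m := by
      intro a b hab
      have : (n a : ℤ) = (n b : ℤ) := by simp [hmdef] at hab; omega
      exact hn.injective (by exact_mod_cast this)
    have htm : Tendsto m atTop cofinite := by
      rw [← Nat.cofinite_eq_atTop]; exact hminj.tendsto_cofinite
    have hFm : Tendsto (fun j => ENNReal.ofReal (ω (m j) ^ p.toReal)
        * (‖(y : ℤ → ℂ) (m j)‖₊ : ℝ≥0∞) ^ p.toReal) atTop (nhds 0) := hcof.comp htm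
    have hrpow : Tendsto (fun j => (ENNReal.ofReal (ω (m j) ^ p.toReal)
        * (‖(y : ℤ → ℂ) (m j)‖₊ : ℝ≥0∞) ^ p.toReal) ^ (1 / p.toReal)) atTop (nhds 0) := by
      have hc := (ENNReal.continuous_rpow_const (y := 1 / p.toReal)).tendsto 0
      rw [ENNReal.zero_rpow_of_pos (by positivity)] at hc
      exact hc.comp hFm
    have heq : ∀ j, t j = ((ENNReal.ofReal (ω (m j) ^ p.toReal)
        * (‖(y : ℤ → ℂ) (m j)‖₊ : ℝ≥0∞) ^ p.toReal) ^ (1 / p.toReal)).toReal := by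
      intro j
      rw [Stmt12Aux.term_rpow hpt (hω _), ENNReal.toReal_mul,
        ENNReal.toReal_ofReal (hω _).le, ENNReal.coe_toReal, coe_nnnorm]
    have := (ENNReal.tendsto_toReal (a := 0) (by simp)).comp hrpow
    rw [ENNReal.toReal_zero] at this
    exact this.congr fun j => (heq j).symm
  -- squeeze
  have hbound : ∀ j, ‖lam j‖ / ‖lam i‖ * ω (m j)
      ≤ (δ j + t j) * (2 / ‖Y‖) := by
    intro j
    have h1 := hkey j
    have h2 := hXlow
    have hωpos := hω (m j)
    have hnj : (0:ℝ) ≤ ‖lam j‖ := norm_nonneg _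
    have hgoal : ‖lam j‖ * ω (m j) * ‖Y‖ ≤ 2 * ((δ j + t j) * ‖lam i‖) := by
      nlinarith [mul_le_mul_of_nonneg_left h2 (mul_nonneg hnj hωpos.le),
        mul_le_mul_of_nonneg_left h1 hlami.le]
    rw [div_mul_eq_mul_div, div_le_iff₀ hlami, show (δ j + t j) * (2 / ‖Y‖) * ‖lam i‖
        = (2 * ((δ j + t j) * ‖lam i‖)) / ‖Y‖ by ring, le_div_iff₀ hYpos]
    exact hgoal
  have hnonneg : ∀ j, 0 ≤ ‖lam j‖ / ‖lam i‖ * ω (m j) := by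
    intro j
    exact mul_nonneg (div_nonneg (norm_nonneg _) (norm_nonneg _)) (hω _).le
  have hlim : Tendsto (fun j => (δ j + t j) * (2 / ‖Y‖)) atTop (nhds 0) := by
    have := (hδ0.add htail).mul_const (2 / ‖Y‖)
    simpa using this
  exact squeeze_zero hnonneg hbound hlim
end
end

section
/- Let B be the bilateral backward shift on ℓ^p(ℤ, ω) with sup_{n∈ℤ} ω_n/ω_{n+1} < ∞, and let Γ ⊂ ℂ with Γ \ {0} non-empty. If there exists x ∈ ℓ^p(ℤ, ω) such that Orb(Γx, B) = {λ B^n x : λ ∈ Γ, n ∈ ℕ} has a non-zero norm limit point, then B is Γ-supercyclic, i.e. there exists z ∈ ℓ^p(ℤ, ω) such that {λ B^n z : λ ∈ Γ, n ∈ ℕ} is dense in ℓ^p(ℤ, ω). -/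
open MeasureTheory Filter Topology
open scoped ENNReal NNReal

set_option linter.unusedSectionVars false
set_option linter.unusedVariables false
set_option maxHeartbeats 1000000

noncomputable section

namespace Stmt13

lemma meas (s : Set ℤ) : MeasurableSet s := trivial

variable {p : ENNReal} [Fact (1 ≤ p)] {ω : ℤ → ℝ}

def W (p : ENNReal) (ω : ℤ → ℝ) (k : ℤ) : ℝ≥0∞ := ENNReal.ofReal ((ω k) ^ p.toReal)

lemma hpt (hp : p ≠ ∞) : 0 < p.toReal := by
  have h1 : (1:ENNReal) ≤ p := Fact.out
  exact ENNReal.toReal_pos (fun h => by simp [h] at h1) hp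

lemma lint (g : ℤ → ℝ≥0∞) : ∫⁻ k, g k ∂(wMeasure p ω) = ∑' k, W p ω k * g k := by
  rw [wMeasure, lintegral_sum_measure]
  congr 1; funext k
  rw [lintegral_smul_measure, lintegral_dirac]
  rfl

lemma W_pos (hω : ∀ k, 0 < ω k) (k : ℤ) : 0 < W p ω k :=
  ENNReal.ofReal_pos.2 (Real.rpow_pos_of_pos (hω k) _)

lemma W_ne_top (k : ℤ) : W p ω k ≠ ∞ := ENNReal.ofReal_ne_top

lemma ae_all (hω : ∀ k, 0 < ω k) {P : ℤ → Prop}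
    (h : ∀ᵐ k ∂(wMeasure p ω), P k) : ∀ k, P k := by
  intro k
  by_contra hk
  have h1 : wMeasure p ω {j | ¬ P j} = 0 := h
  have h2 : W p ω k • Measure.dirac k ≤ wMeasure p ω := Measure.le_sum _ k
  have h3 : (W p ω k • Measure.dirac k) {j | ¬ P j} = 0 :=
    le_antisymm (h1 ▸ h2 {j | ¬ P j}) bot_le
  rw [Measure.smul_apply, smul_eq_mul, Measure.dirac_apply' _ (meas _)] at h3
  simp [Set.indicator, hk] at h3
  exact absurd h3 (W_pos hω k).ne'

variable (p ω) in
abbrev X := Lp ℂ p (wMeasure p ω)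

lemma eLp_eq (hp : p ≠ ∞) (f : ℤ → ℂ) :
    eLpNorm f p (wMeasure p ω) = (∑' k, W p ω k * (‖f k‖₊ : ℝ≥0∞) ^ p.toReal) ^ (1 / p.toReal) := by
  rw [eLpNorm_eq_lintegral_rpow_enorm_toReal (by have := hpt (p := p) hp; intro h; simp [h] at this) hp,
    lint]
  rfl

/-- p-th power of the norm as a tsum -/
lemma norm_pow_eq (hp : p ≠ ∞) (f : X p ω) :
    (ENNReal.ofReal ‖f‖) ^ p.toReal = ∑' k, W p ω k * (‖f k‖₊ : ℝ≥0∞) ^ p.toReal := by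
  have h1 : eLpNorm (⇑f) p (wMeasure p ω) ≠ ∞ := Lp.eLpNorm_ne_top f
  rw [Lp.norm_def, ENNReal.ofReal_toReal h1, eLp_eq hp, ← ENNReal.rpow_mul,
    one_div, inv_mul_cancel₀ (hpt (p := p) hp).ne', ENNReal.rpow_one]


section coords
variable (hω : ∀ k, 0 < ω k) (hp : p ≠ ∞)
include hω hp

lemma coe_smul (c : ℂ) (f : X p ω) : ∀ k, (c • f : X p ω) k = c * f k :=
  ae_all hω ((Lp.coeFn_smul c f).mono fun k hk => by simpa using hk)

lemma coe_add (f g : X p ω) : ∀ k, (f + g : X p ω) k = f k + g k :=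
  ae_all hω ((Lp.coeFn_add f g).mono fun k hk => by simpa using hk)

lemma coe_sub (f g : X p ω) : ∀ k, (f - g : X p ω) k = f k - g k :=
  ae_all hω ((Lp.coeFn_sub f g).mono fun k hk => by simpa using hk)

lemma coe_zero : ∀ k, (0 : X p ω) k = 0 :=
  ae_all hω ((Lp.coeFn_zero ℂ p (wMeasure p ω)).mono fun k hk => by simpa using hk)

lemma coe_toLp {f : ℤ → ℂ} (hf : MemLp f p (wMeasure p ω)) : ∀ k, (hf.toLp f) k = f k :=
  ae_all hω (hf.coeFn_toLp.mono fun k hk => by simpa using hk)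

lemma ext_coords {f g : X p ω} (h : ∀ k, f k = g k) : f = g :=
  Lp.ext (Filter.Eventually.of_forall h)

lemma eq_zero_of_coords {f : X p ω} (h : ∀ k, f k = 0) : f = 0 :=
  ext_coords hω hp (fun k => by rw [h k, coe_zero hω hp])

lemma memℒp_fin {c : ℤ → ℂ} {s : Finset ℤ} (hsupp : ∀ j ∉ s, c j = 0) :
    MemLp c p (wMeasure p ω) := by
  refine ⟨(measurable_from_top.stronglyMeasurable).aestronglyMeasurable, ?_⟩
  rw [eLp_eq hp]
  refine ENNReal.rpow_lt_top_of_nonneg (by positivity) ?_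
  rw [tsum_eq_sum (s := s) (fun b hb => by simp [hsupp b hb, ENNReal.zero_rpow_of_pos (hpt hp)])]
  exact (ENNReal.sum_lt_top.2 fun j _ => ENNReal.mul_lt_top (ENNReal.ofReal_lt_top)
    (ENNReal.rpow_lt_top_of_nonneg (hpt hp).le ENNReal.coe_ne_top)).ne

/-- the Lp element of a finitely supported coordinate function -/
def fin (c : ℤ → ℂ) (s : Finset ℤ) (hsupp : ∀ j ∉ s, c j = 0) : X p ω :=
  (memℒp_fin hω hp hsupp).toLp c

lemma coe_fin {c : ℤ → ℂ} {s : Finset ℤ} (hsupp : ∀ j ∉ s, c j = 0) :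
    ∀ k, (fin hω hp c s hsupp) k = c k := coe_toLp hω hp _

/-- norm of a "single" supported at one point -/
lemma norm_single (c : ℂ) (j : ℤ) (hsupp : ∀ k ∉ ({j} : Finset ℤ), (fun k => if k = j then c else 0) k = 0) :
    ‖fin hω hp _ {j} hsupp‖ = ‖c‖ * ω j := by
  have h1 : eLpNorm (fun k : ℤ => if k = j then c else 0) p (wMeasure p ω)
      = (W p ω j * (‖c‖₊ : ℝ≥0∞) ^ p.toReal) ^ (1/p.toReal) := by
    rw [eLp_eq hp, tsum_eq_sum (s := {j})
      (fun b hb => by simp only [Finset.mem_singleton] at hb; simp [hb, ENNReal.zero_rpow_of_pos (hpt hp)])]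
    simp
  have h2 : ‖fin hω hp _ {j} hsupp‖ = (eLpNorm (fun k : ℤ => if k = j then c else 0) p (wMeasure p ω)).toReal := by
    rw [fin, Lp.norm_toLp, eLpNorm_congr_ae (Filter.Eventually.of_forall (fun k => rfl))]
  have hpt' := hpt (p := p) hp
  rw [h2, h1, W, ← ENNReal.ofReal_rpow_of_pos (hω j), ← ENNReal.mul_rpow_of_nonneg _ _ hpt'.le,
    ← ENNReal.rpow_mul, mul_one_div, div_self hpt'.ne', ENNReal.rpow_one,
    ENNReal.toReal_mul, ENNReal.toReal_ofReal (hω j).le]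
  simp [mul_comm]


lemma coe_sum {ι : Type*} (s : Finset ι) (f : ι → X p ω) :
    ∀ k, (∑ j ∈ s, f j : X p ω) k = ∑ j ∈ s, (f j) k := by
  classical
  induction s using Finset.induction with
  | empty => simpa using coe_zero hω hp
  | insert j s hj ih =>
      intro k
      rw [Finset.sum_insert hj, coe_add hω hp, ih k, Finset.sum_insert hj]

lemma fin_eq_sum (c : ℤ → ℂ) (s : Finset ℤ) (hsupp : ∀ j ∉ s, c j = 0) :
    fin hω hp c s hsupp = ∑ j ∈ s, fin hω hp (fun k => if k = j then c j else 0) {j}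
      (by intro k hk; simp only [Finset.mem_singleton] at hk; simp [hk]) := by
  apply ext_coords hω hp
  intro k
  rw [coe_fin hω hp, coe_sum hω hp]
  have hterm : ∀ j ∈ s, (fin hω hp (fun k => if k = j then c j else 0) {j}
      (by intro k hk; simp only [Finset.mem_singleton] at hk; simp [hk]) : X p ω) k
      = if k = j then c j else 0 := fun j _ => coe_fin hω hp _ k
  rw [Finset.sum_congr rfl hterm, Finset.sum_ite_eq s k c]
  by_cases hk : k ∈ s <;> simp [hk, hsupp]

lemma norm_fin_le (c : ℤ → ℂ) (s : Finset ℤ) (hsupp : ∀ j ∉ s, c j = 0) :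
    ‖fin hω hp c s hsupp‖ ≤ ∑ j ∈ s, ‖c j‖ * ω j := by
  rw [fin_eq_sum hω hp]
  refine (norm_sum_le _ _).trans ?_
  refine Finset.sum_le_sum fun j _ => ?_
  rw [norm_single hω hp]

lemma coord_le (f : X p ω) (j : ℤ) : ‖f j‖ * ω j ≤ ‖f‖ := by
  have hpt' := hpt (p := p) hp
  have h1 : W p ω j * (‖f j‖₊ : ℝ≥0∞) ^ p.toReal ≤ (ENNReal.ofReal ‖f‖) ^ p.toReal := by
    rw [norm_pow_eq hp]; exact ENNReal.le_tsum j
  have h2 := ENNReal.rpow_le_rpow h1 (by positivity : (0:ℝ) ≤ 1/p.toReal)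
  rw [← ENNReal.rpow_mul, mul_one_div, div_self hpt'.ne', ENNReal.rpow_one,
    W, ← ENNReal.ofReal_rpow_of_pos (hω j), ← ENNReal.mul_rpow_of_nonneg _ _ hpt'.le,
    ← ENNReal.rpow_mul, mul_one_div, div_self hpt'.ne', ENNReal.rpow_one] at h2
  have h3 : ENNReal.ofReal (‖f j‖ * ω j) ≤ ENNReal.ofReal ‖f‖ := by
    rw [ENNReal.ofReal_mul (norm_nonneg _), ofReal_norm]
    rw [mul_comm] at h2
    simpa [enorm_eq_nnnorm] using h2
  exact (ENNReal.ofReal_le_ofReal_iff (norm_nonneg _)).1 h3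

lemma pow_coe (B : X p ω →L[ℂ] X p ω) (hB : ∀ (f : X p ω) (k : ℤ), (B f) k = f (k+1)) :
    ∀ (m : ℕ) (f : X p ω) (k : ℤ), ((B ^ m) f) k = f (k + m) := by
  intro m
  induction m with
  | zero => intro f k; simp [pow_zero, ContinuousLinearMap.one_apply]
  | succ m ih =>
      intro f k
      rw [pow_succ, ContinuousLinearMap.mul_apply, ih (B f) k, hB]
      congr 1
      push_cast
      ring

lemma coord_decay (f : X p ω) :
    Tendsto (fun m : ℤ => ‖f m‖ * ω m) cofinite (𝓝 0) := by
  have hpt' := hpt (p := p) hp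
  set h : ℤ → ℝ≥0∞ := fun m => W p ω m * (‖f m‖₊ : ℝ≥0∞) ^ p.toReal with hh
  have hsum : ∑' m, h m ≠ ∞ := by
    rw [← norm_pow_eq hp]
    exact (ENNReal.rpow_lt_top_of_nonneg hpt'.le ENNReal.ofReal_ne_top).ne
  have h0 : Tendsto h cofinite (𝓝 0) := ENNReal.tendsto_cofinite_zero_of_tsum_ne_top hsum
  have h1 : Tendsto (fun m => (h m) ^ (1/p.toReal)) cofinite (𝓝 0) := by
    have hc : ContinuousAt (fun a : ℝ≥0∞ => a ^ (1/p.toReal)) 0 :=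
      (ENNReal.continuous_rpow_const).continuousAt
    have h2 := hc.tendsto.comp h0
    rw [ENNReal.zero_rpow_of_pos (by positivity : (0:ℝ) < 1/p.toReal)] at h2
    exact h2
  have hg : ∀ m, (h m) ^ (1/p.toReal) = ENNReal.ofReal (ω m) * (‖f m‖₊ : ℝ≥0∞) := by
    intro m
    show (W p ω m * (‖f m‖₊ : ℝ≥0∞) ^ p.toReal) ^ (1/p.toReal) = _
    rw [W, ← ENNReal.ofReal_rpow_of_pos (hω m), ← ENNReal.mul_rpow_of_nonneg _ _ hpt'.le,
      ← ENNReal.rpow_mul, mul_one_div, div_self hpt'.ne', ENNReal.rpow_one]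
  have h2 : Tendsto (fun m => ((h m) ^ (1/p.toReal)).toReal) cofinite (𝓝 0) := by
    have := (ENNReal.tendsto_toReal (by simp : (0:ℝ≥0∞) ≠ ∞)).comp h1
    simpa [Function.comp_def] using this
  refine h2.congr fun m => ?_
  rw [hg, ENNReal.toReal_mul, ENNReal.toReal_ofReal (hω m).le]
  simp [mul_comm]

lemma trunc_approx (f : X p ω) {ε : ℝ} (hε : 0 < ε) :
    ∃ (c : ℤ → ℂ) (s : Finset ℤ) (hsupp : ∀ j ∉ s, c j = 0),
      ‖f - fin hω hp c s hsupp‖ < ε := by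
  have hpt' := hpt (p := p) hp
  set h : ℤ → ℝ≥0∞ := fun m => W p ω m * (‖f m‖₊ : ℝ≥0∞) ^ p.toReal with hh
  have hsum : ∑' m, h m ≠ ∞ := by
    rw [← norm_pow_eq hp]
    exact (ENNReal.rpow_lt_top_of_nonneg hpt'.le ENNReal.ofReal_ne_top).ne
  have htail := ENNReal.tendsto_tsum_compl_atTop_zero hsum
  have hεp : (0:ℝ≥0∞) < ENNReal.ofReal ε ^ p.toReal := by
    refine ENNReal.rpow_pos (ENNReal.ofReal_pos.2 hε) ENNReal.ofReal_ne_top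
  obtain ⟨s, hs⟩ : ∃ s : Finset ℤ, ∑' (b : {x // x ∉ s}), h b < ENNReal.ofReal ε ^ p.toReal := by
    have := htail.eventually_lt_const hεp
    exact this.exists
  set c : ℤ → ℂ := fun k => if k ∈ s then f k else 0 with hc
  have hsupp : ∀ j ∉ s, c j = 0 := fun j hj => by simp [hc, hj]
  refine ⟨c, s, hsupp, ?_⟩
  set g := f - fin hω hp c s hsupp with hgdef
  have hgco : ∀ k, (g : X p ω) k = if k ∈ s then 0 else f k := by
    intro k
    rw [hgdef, coe_sub hω hp, coe_fin hω hp]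
    by_cases hk : k ∈ s <;> simp [hc, hk]
  have hkey : (ENNReal.ofReal ‖g‖) ^ p.toReal < ENNReal.ofReal ε ^ p.toReal := by
    rw [norm_pow_eq hp]
    have heq : ∀ k, W p ω k * (‖g k‖₊ : ℝ≥0∞) ^ p.toReal
        = Set.indicator {x : ℤ | x ∉ s} h k := by
      intro k
      by_cases hk : k ∈ s
      · simp [hgco k, hk, Set.indicator, ENNReal.zero_rpow_of_pos hpt']
      · simp [Set.indicator, hk, hh, hgco k]
    calc ∑' k, W p ω k * (‖g k‖₊ : ℝ≥0∞) ^ p.toReal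
        = ∑' k, Set.indicator {x : ℤ | x ∉ s} h k := by
          exact tsum_congr heq
      _ = ∑' (b : {x : ℤ // x ∉ s}), h b := (tsum_subtype {x : ℤ | x ∉ s} h).symm
      _ < _ := hs
  have : ENNReal.ofReal ‖g‖ < ENNReal.ofReal ε := by
    have := ENNReal.rpow_lt_rpow_iff hpt' |>.1 hkey
    exact this
  have := (ENNReal.ofReal_lt_ofReal_iff hε).1 this
  exact this


lemma fin_sub (c c' : ℤ → ℂ) (s : Finset ℤ) (h : ∀ j ∉ s, c j = 0) (h' : ∀ j ∉ s, c' j = 0) :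
    fin hω hp c s h - fin hω hp c' s h' = fin hω hp (fun k => c k - c' k) s
      (fun j hj => by simp [h j hj, h' j hj]) := by
  apply ext_coords hω hp
  intro k
  rw [coe_sub hω hp, coe_fin hω hp, coe_fin hω hp, coe_fin hω hp]

/-- rational finitely supported vectors -/
def F (d : ℤ →₀ ℚ × ℚ) : X p ω :=
  fin hω hp (fun k => ((d k).1 : ℝ) + ((d k).2 : ℝ) * Complex.I) d.support
    (fun j hj => by
      have : d j = 0 := Finsupp.notMem_support_iff.1 hj
      simp [this])

lemma dense_F : Dense (Set.range (F hω hp)) := by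
  rw [Metric.dense_iff]
  intro f ε hε
  obtain ⟨c, s, hsupp, hfc⟩ := trunc_approx hω hp f (half_pos hε)
  set δ : ℝ := ε / (2 * (∑ j ∈ s, ω j + 1)) with hδdef
  have hωsum : 0 < ∑ j ∈ s, ω j + 1 := by
    have : (0:ℝ) ≤ ∑ j ∈ s, ω j := Finset.sum_nonneg fun j _ => (hω j).le
    linarith
  have hδ : 0 < δ := by positivity
  have hratc : ∀ j : ℤ, ∃ q : ℚ × ℚ, ‖c j - ((q.1 : ℝ) + (q.2 : ℝ) * Complex.I)‖ < δ := by
    intro j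
    obtain ⟨qa, hqa⟩ := exists_rat_near (c j).re (half_pos hδ)
    obtain ⟨qb, hqb⟩ := exists_rat_near (c j).im (half_pos hδ)
    refine ⟨(qa, qb), ?_⟩
    have h1 : (c j - ((qa : ℝ) + (qb : ℝ) * Complex.I)).re = (c j).re - qa := by simp
    have h2 : (c j - ((qa : ℝ) + (qb : ℝ) * Complex.I)).im = (c j).im - qb := by simp
    calc ‖c j - ((qa : ℝ) + (qb : ℝ) * Complex.I)‖
        ≤ |(c j - ((qa : ℝ) + (qb : ℝ) * Complex.I)).re| + |(c j - ((qa : ℝ) + (qb : ℝ) * Complex.I)).im| :=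
          Complex.norm_le_abs_re_add_abs_im _
      _ < δ := by
          rw [h1, h2]; linarith
  choose q hq using hratc
  set d : ℤ →₀ ℚ × ℚ := Finsupp.onFinset s (fun j => if j ∈ s then q j else 0)
    (fun j hj => by by_contra hjs; simp [hjs] at hj) with hd
  refine ⟨F hω hp d, Metric.mem_ball.2 ?_, Set.mem_range_self d⟩
  rw [dist_comm, dist_eq_norm]
  set cd : ℤ → ℂ := fun k => ((d k).1 : ℝ) + ((d k).2 : ℝ) * Complex.I with hcd
  have hsd : ∀ j ∉ s, cd j = 0 := by
    intro j hj
    have : d j = 0 := by simp [hd, Finsupp.onFinset_apply, if_neg hj]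
    simp [hcd, this]
  have hFco : ∀ k, (F hω hp d : X p ω) k = cd k := by
    intro k
    rw [F]
    exact coe_fin hω hp _ k
  have hFd : F hω hp d = fin hω hp cd s hsd :=
    ext_coords hω hp (fun k => by rw [hFco, coe_fin hω hp])
  have key : ‖fin hω hp c s hsupp - F hω hp d‖ ≤ ε / 2 := by
    rw [hFd, fin_sub hω hp]
    refine (norm_fin_le hω hp _ _ _).trans ?_
    have hterm : ∀ j ∈ s, ‖c j - cd j‖ * ω j ≤ δ * ω j := by
      intro j hj
      have hdq : d j = q j := by simp [hd, Finsupp.onFinset_apply, if_pos hj]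
      have : cd j = ((q j).1 : ℝ) + ((q j).2 : ℝ) * Complex.I := by rw [hcd]; simp [hdq]
      rw [this]
      exact mul_le_mul_of_nonneg_right (hq j).le (hω j).le
    refine (Finset.sum_le_sum hterm).trans ?_
    rw [← Finset.mul_sum, hδdef]
    rw [div_mul_eq_mul_div, div_le_iff₀ (by positivity)]
    have h1 : ∑ j ∈ s, ω j ≤ ∑ j ∈ s, ω j + 1 := by linarith
    calc ε * ∑ j ∈ s, ω j ≤ ε * (∑ j ∈ s, ω j + 1) := by
          exact mul_le_mul_of_nonneg_left h1 hε.le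
      _ ≤ ε / 2 * (2 * (∑ j ∈ s, ω j + 1)) := by ring_nf; linarith [mul_pos hε hωsum]
  calc ‖f - F hω hp d‖ ≤ ‖f - fin hω hp c s hsupp‖ + ‖fin hω hp c s hsupp - F hω hp d‖ := by
        have := norm_sub_le_norm_sub_add_norm_sub f (fin hω hp c s hsupp) (F hω hp d)
        exact this
    _ < ε / 2 + ε / 2 := by
        refine add_lt_add_of_lt_of_le hfc key
    _ = ε := by ring

lemma separable_X : TopologicalSpace.SeparableSpace (X p ω) :=
  ⟨⟨Set.range (F hω hp), Set.countable_range _, dense_F hω hp⟩⟩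

end coords

/-- Birkhoff transitivity for a countable family of continuous maps. -/
lemma birkhoff {Y : Type*} [MetricSpace Y] [CompleteSpace Y] [Nonempty Y]
    [TopologicalSpace.SeparableSpace Y]
    (T : ℕ → Y → Y) (hT : ∀ i, Continuous (T i))
    (htrans : ∀ U V : Set Y, IsOpen U → U.Nonempty → IsOpen V → V.Nonempty →
      ∃ i, ∃ u ∈ U, T i u ∈ V) :
    ∃ z : Y, Dense (Set.range fun i => T i z) := by
  haveI : SecondCountableTopology Y := UniformSpace.secondCountable_of_separable Y
  obtain ⟨b, hbc, hbne, hb⟩ := TopologicalSpace.exists_countable_basis Y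
  haveI : Countable b := hbc.to_subtype
  have hGo : ∀ V : b, IsOpen (⋃ i, T i ⁻¹' (V : Set Y)) :=
    fun V => isOpen_iUnion fun i => (hb.isOpen V.2).preimage (hT i)
  have hGd : ∀ V : b, Dense (⋃ i, T i ⁻¹' (V : Set Y)) := by
    intro V
    rw [dense_iff_inter_open]
    intro U hU hUne
    have hVne : (V : Set Y).Nonempty := by
      rcases Set.eq_empty_or_nonempty (V : Set Y) with h | h
      · exact absurd (h ▸ V.2) hbne
      · exact h
    obtain ⟨i, u, hu, hTu⟩ := htrans U V hU hUne (hb.isOpen V.2) hVne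
    exact ⟨u, hu, Set.mem_iUnion.2 ⟨i, hTu⟩⟩
  have hG : Dense (⋂ (V : b), ⋃ i, T i ⁻¹' (V : Set Y)) := dense_iInter_of_isOpen hGo hGd
  obtain ⟨z, hz⟩ := hG.nonempty
  refine ⟨z, ?_⟩
  rw [dense_iff_inter_open]
  intro U hU hUne
  obtain ⟨u, hu⟩ := hUne
  obtain ⟨V, hVb, hxV, hVU⟩ := hb.exists_subset_of_mem_open hu hU
  have hzV := Set.mem_iInter.1 hz ⟨V, hVb⟩
  obtain ⟨i, hi⟩ := Set.mem_iUnion.1 hzV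
  exact ⟨T i z, hVU hi, Set.mem_range_self i⟩

end Stmt13

open Stmt13

/-- if for some `x` the orbit `{λ • B ^ n x : λ ∈ Γ, n ∈ ℕ}` under the
bilateral backward shift has a non-zero norm limit point, then `B` is `Γ`-supercyclic. -/
theorem stmt13 (p : ENNReal) [Fact (1 ≤ p)] (hp : p ≠ ∞) (ω : ℤ → ℝ) (hω : ∀ k, 0 < ω k)
    (hbdd : ∃ C : ℝ, ∀ k : ℤ, ω k / ω (k + 1) ≤ C)
    (B : Lp ℂ p (wMeasure p ω) →L[ℂ] Lp ℂ p (wMeasure p ω))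
    (hB : ∀ (x : Lp ℂ p (wMeasure p ω)) (k : ℤ), B x k = x (k + 1))
    (Γ : Set ℂ) (hΓ : (Γ \ {0}).Nonempty)
    (x : Lp ℂ p (wMeasure p ω))
    (lam : ℕ → ℂ) (hlam : ∀ k, lam k ∈ Γ)
    (n : ℕ → ℕ) (hn : StrictMono n)
    (y : Lp ℂ p (wMeasure p ω)) (hy : y ≠ 0)
    (hconv : Tendsto (fun k => lam k • (B ^ n k) x) atTop (nhds y)) :
    ∃ z : Lp ℂ p (wMeasure p ω),
      Dense {w : Lp ℂ p (wMeasure p ω) | ∃ γ ∈ Γ, ∃ m : ℕ, w = γ • (B ^ m) z} := by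
  classical
  obtain ⟨C0, hC0⟩ := hbdd
  set C' : ℝ := max C0 1 with hC'
  have hC'1 : (1:ℝ) ≤ C' := le_max_right _ _
  have hC'pos : (0:ℝ) < C' := lt_of_lt_of_le one_pos hC'1
  have hstep : ∀ m : ℤ, ω m ≤ C' * ω (m+1) := by
    intro m
    have h1 : ω m / ω (m+1) ≤ C0 := hC0 m
    rw [div_le_iff₀ (hω (m+1))] at h1
    calc ω m ≤ C0 * ω (m+1) := h1
      _ ≤ C' * ω (m+1) := mul_le_mul_of_nonneg_right (le_max_left _ _) (hω _).le
  have hchain : ∀ (d : ℕ) (b : ℤ), ω (b - d) ≤ C' ^ d * ω b := by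
    intro d
    induction d with
    | zero => intro b; simp
    | succ d ih =>
        intro b
        have h1 : ω (b - ((d:ℕ)+1:ℕ)) = ω ((b-1) - (d:ℕ)) := by
          congr 1; push_cast; ring
        rw [h1]
        calc ω ((b-1) - (d:ℕ)) ≤ C'^d * ω (b-1) := ih (b-1)
          _ ≤ C'^d * (C' * ω b) := by
              refine mul_le_mul_of_nonneg_left ?_ (by positivity)
              have h2 := hstep (b-1)
              simpa using h2
          _ = C'^(d+1) * ω b := by ring
  have hbig : ∀ (D : ℕ) (a b : ℤ), a ≤ b → b - a ≤ (D:ℤ) → ω a ≤ C' ^ D * ω b := by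
    intro D a b hab hD
    have h1 : ω a = ω (b - (((b - a).toNat : ℕ) : ℤ)) := by
      rw [Int.toNat_of_nonneg (by omega)]; congr 1; ring
    rw [h1]
    refine (hchain _ b).trans (mul_le_mul_of_nonneg_right (pow_le_pow_right₀ hC'1 ?_) (hω b).le)
    omega
  -- coordinates of powers
  have hpow := Stmt13.pow_coe hω hp B hB
  have hnorm0 : Tendsto (fun k => ‖lam k • (B ^ n k) x - y‖) atTop (𝓝 0) :=
    tendsto_iff_norm_sub_tendsto_zero.1 hconv
  have hdiffco : ∀ (k : ℕ) (j : ℤ),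
      ((lam k • (B ^ n k) x - y : X p ω) : ℤ → ℂ) j = lam k * x (j + n k) - y j := by
    intro k j
    rw [Stmt13.coe_sub hω hp, Stmt13.coe_smul hω hp, hpow]
  have hcoord : ∀ j : ℤ, Tendsto (fun k => lam k * (x : ℤ → ℂ) (j + n k)) atTop (𝓝 (y j)) := by
    intro j
    rw [tendsto_iff_norm_sub_tendsto_zero]
    have hb : ∀ k, ‖lam k * x (j + n k) - y j‖ ≤ ‖lam k • (B ^ n k) x - y‖ / ω j := by
      intro k
      rw [le_div_iff₀ (hω j)]
      calc ‖lam k * x (j + n k) - y j‖ * ω j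
          = ‖((lam k • (B ^ n k) x - y : X p ω) : ℤ → ℂ) j‖ * ω j := by rw [hdiffco]
        _ ≤ _ := Stmt13.coord_le hω hp _ j
    refine squeeze_zero (fun k => norm_nonneg _) hb ?_
    simpa using hnorm0.div_const (ω j)
  obtain ⟨j0, hj0⟩ : ∃ j0, (y : ℤ → ℂ) j0 ≠ 0 := by
    by_contra h
    push_neg at h
    exact hy (Stmt13.eq_zero_of_coords hω hp h)
  set c := ‖(y : ℤ → ℂ) j0‖ with hcdef
  have hc : 0 < c := norm_pos_iff.2 hj0
  have hlow : ∀ᶠ k in atTop, c/2 < ‖lam k * (x : ℤ → ℂ) (j0 + n k)‖ := by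
    have h1 : Tendsto (fun k => ‖lam k * (x : ℤ → ℂ) (j0 + n k)‖) atTop (𝓝 c) := (hcoord j0).norm
    exact h1.eventually (eventually_gt_nhds (by linarith))
  have hnint : Tendsto (fun k => (n k : ℤ)) atTop atTop :=
    tendsto_natCast_atTop_atTop.comp hn.tendsto_atTop
  have hcofin : Tendsto (fun k => j0 + (n k : ℤ)) atTop (cofinite : Filter ℤ) := by
    have h1 : Tendsto (fun k => j0 + (n k : ℤ)) atTop atTop := tendsto_atTop_add_const_left _ j0 hnint
    rw [Int.cofinite_eq]
    exact h1.mono_right le_sup_right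
  have hA : Tendsto (fun k => ‖(x : ℤ → ℂ) (j0 + n k)‖ * ω (j0 + n k)) atTop (𝓝 0) :=
    (Stmt13.coord_decay hω hp x).comp hcofin
  have hytail : Tendsto (fun m : ℤ => ‖(y : ℤ → ℂ) m‖ * ω m) atBot (𝓝 0) := by
    refine (Stmt13.coord_decay hω hp y).mono_left ?_
    rw [Int.cofinite_eq]; exact le_sup_left
  -- Birkhoff setup
  haveI : TopologicalSpace.SeparableSpace (X p ω) := Stmt13.separable_X hω hp
  haveI : Nonempty (X p ω) := ⟨0⟩
  set T : ℕ → X p ω → X p ω := fun i z => lam i.unpair.1 • (B ^ i.unpair.2) z with hTdef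
  have hTc : ∀ i, Continuous (T i) := fun i => show Continuous (fun z => lam i.unpair.1 • (B ^ i.unpair.2) z) from
    ((B ^ i.unpair.2).continuous.const_smul (lam i.unpair.1))
  have htrans : ∀ U V : Set (X p ω), IsOpen U → U.Nonempty → IsOpen V → V.Nonempty →
      ∃ i, ∃ w ∈ U, T i w ∈ V := by
    intro U V hU hUne hV hVne
    obtain ⟨u', hu'⟩ := hUne
    obtain ⟨v', hv'⟩ := hVne
    obtain ⟨ε1, hε1, hball1⟩ := Metric.isOpen_iff.1 hU u' hu'
    obtain ⟨ε2, hε2, hball2⟩ := Metric.isOpen_iff.1 hV v' hv'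
    obtain ⟨u, su, hsu, hu⟩ := Stmt13.trunc_approx hω hp u' (by positivity : (0:ℝ) < ε1/4)
    obtain ⟨v, sv, hsv, hv⟩ := Stmt13.trunc_approx hω hp v' (by positivity : (0:ℝ) < ε2/2)
    set Mv : ℤ := (insert j0 sv).max' (Finset.insert_nonempty _ _) with hMvdef
    set mv : ℤ := (insert j0 sv).min' (Finset.insert_nonempty _ _) with hmvdef
    set Mu : ℤ := (insert j0 su).max' (Finset.insert_nonempty _ _) with hMudef
    set mu : ℤ := (insert j0 su).min' (Finset.insert_nonempty _ _) with hmudef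
    have hMv' : ∀ j ∈ sv, j ≤ Mv := fun j hj => Finset.le_max' _ j (Finset.mem_insert_of_mem hj)
    have hmv' : ∀ j ∈ sv, mv ≤ j := fun j hj => Finset.min'_le _ j (Finset.mem_insert_of_mem hj)
    have hMu' : ∀ j ∈ su, j ≤ Mu := fun j hj => Finset.le_max' _ j (Finset.mem_insert_of_mem hj)
    have hmu' : ∀ j ∈ su, mu ≤ j := fun j hj => Finset.min'_le _ j (Finset.mem_insert_of_mem hj)
    have hmvMv : mv ≤ Mv := Finset.min'_le _ _ (Finset.max'_mem _ _)
    have hmuMu : mu ≤ Mu := Finset.min'_le _ _ (Finset.max'_mem _ _)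
    have hmuj0 : mu ≤ j0 := Finset.min'_le _ j0 (Finset.mem_insert_self _ _)
    set t : ℤ := j0 - Mv with htdef
    set D : ℕ := (Mv - mv).toNat with hDdef
    -- choose k0
    obtain ⟨k0, hk01, hk02⟩ := (hlow.and (hnint.eventually_ge_atTop (Mu - j0 - t))).exists
    set D' : ℕ := (j0 + (n k0 : ℤ) + t - mu).toNat with hD'def
    have hD'nn : (0:ℤ) ≤ j0 + (n k0 : ℤ) + t - mu := by omega
    have hlamk0 : lam k0 ≠ 0 := by
      intro h
      rw [h] at hk01
      simp at hk01
      linarith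
    have hlamk0' : (0:ℝ) < ‖lam k0‖ := norm_pos_iff.2 hlamk0
    have hxk0 : c / (2 * ‖lam k0‖) ≤ ‖(x : ℤ → ℂ) (j0 + n k0)‖ := by
      rw [div_le_iff₀ (by positivity)]
      rw [norm_mul] at hk01
      nlinarith [hk01]
    set q : ℕ → ℤ := fun k' => j0 + (n k0 : ℤ) - n k' with hqdef
    have hqbot : Tendsto q atTop atBot := by
      have h1 : Tendsto (fun k' => -(n k' : ℤ)) atTop atBot := tendsto_neg_atBot_iff.2 hnint
      have h2 := tendsto_atBot_add_const_left _ (j0 + (n k0:ℤ)) h1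
      refine h2.congr fun k' => by rw [hqdef]; ring
    set R : ℕ → ℝ := fun k' => ‖lam k'‖ * ω (q k') with hRdef
    have hRle : ∀ k', R k' ≤ (2 * ‖lam k0‖ / c) *
        (‖lam k' • (B ^ n k') x - y‖ + ‖(y : ℤ → ℂ) (q k')‖ * ω (q k')) := by
      intro k'
      have hqn : q k' + (n k' : ℤ) = j0 + n k0 := by rw [hqdef]; ring
      have h2 : ‖lam k' * (x : ℤ → ℂ) (q k' + n k')‖
          ≤ ‖lam k' * (x : ℤ → ℂ) (q k' + n k') - y (q k')‖ + ‖(y : ℤ → ℂ) (q k')‖ := by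
        have := norm_add_le (lam k' * (x : ℤ → ℂ) (q k' + n k') - y (q k')) (y (q k'))
        simpa using this
      have h1 : ‖lam k' * (x : ℤ → ℂ) (q k' + n k')‖ * ω (q k')
          ≤ ‖lam k' • (B ^ n k') x - y‖ + ‖(y : ℤ → ℂ) (q k')‖ * ω (q k') := by
        calc ‖lam k' * (x : ℤ → ℂ) (q k' + n k')‖ * ω (q k')
            ≤ (‖lam k' * (x : ℤ → ℂ) (q k' + n k') - y (q k')‖ + ‖(y : ℤ → ℂ) (q k')‖) * ω (q k') :=
              mul_le_mul_of_nonneg_right h2 (hω _).le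
          _ = ‖lam k' * (x : ℤ → ℂ) (q k' + n k') - y (q k')‖ * ω (q k')
              + ‖(y : ℤ → ℂ) (q k')‖ * ω (q k') := by ring
          _ ≤ _ := by
              refine add_le_add ?_ le_rfl
              calc ‖lam k' * (x : ℤ → ℂ) (q k' + n k') - y (q k')‖ * ω (q k')
                  = ‖((lam k' • (B ^ n k') x - y : X p ω) : ℤ → ℂ) (q k')‖ * ω (q k') := by
                    rw [hdiffco]
                _ ≤ _ := Stmt13.coord_le hω hp _ _
      have e1 : 1 ≤ (2 * ‖lam k0‖ / c) * ‖(x : ℤ → ℂ) (j0 + n k0)‖ := by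
        rw [div_mul_eq_mul_div, le_div_iff₀ hc]
        rw [div_le_iff₀ (by positivity : (0:ℝ) < 2 * ‖lam k0‖)] at hxk0
        nlinarith [hxk0]
      have e2 : R k' ≤ ((2 * ‖lam k0‖ / c) * ‖(x : ℤ → ℂ) (j0 + n k0)‖) * R k' :=
        le_mul_of_one_le_left (mul_nonneg (norm_nonneg _) (hω _).le) e1
      refine e2.trans ?_
      have e3 : ((2 * ‖lam k0‖ / c) * ‖(x : ℤ → ℂ) (j0 + n k0)‖) * R k'
          = (2 * ‖lam k0‖ / c) * (‖lam k' * (x : ℤ → ℂ) (q k' + n k')‖ * ω (q k')) := by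
        rw [hRdef, hqn, norm_mul]; ring
      rw [e3]
      refine mul_le_mul_of_nonneg_left h1 (by positivity)
    have hR0 : Tendsto R atTop (𝓝 0) := by
      have hg : Tendsto (fun k' => (2 * ‖lam k0‖ / c) *
          (‖lam k' • (B ^ n k') x - y‖ + ‖(y : ℤ → ℂ) (q k')‖ * ω (q k'))) atTop (𝓝 0) := by
        have h1 := hnorm0.add (hytail.comp hqbot)
        rw [add_zero] at h1
        have h2 := h1.const_mul (2 * ‖lam k0‖ / c)
        rw [mul_zero] at h2
        exact h2
      exact squeeze_zero (fun k' => mul_nonneg (norm_nonneg _) (hω _).le) hRle hg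
    -- choose k'
    have hev3 : ∀ᶠ k' in atTop, (∑ j ∈ su, ‖u j‖) * (C'^D' * R k') < ε2/2 := by
      have h1 : Tendsto (fun k' => (∑ j ∈ su, ‖u j‖) * (C'^D' * R k')) atTop (𝓝 0) := by
        have h2 := (hR0.const_mul (C'^D')).const_mul (∑ j ∈ su, ‖u j‖)
        simpa using h2
      exact h1.eventually_lt_const (by positivity)
    have hev4 : ∀ᶠ k' in atTop, (∑ j ∈ sv, ‖v j‖) *
        (C'^D * ((2/c) * (‖(x : ℤ → ℂ) (j0 + n k')‖ * ω (j0 + n k')))) < ε1/4 := by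
      have h1 : Tendsto (fun k' => (∑ j ∈ sv, ‖v j‖) *
          (C'^D * ((2/c) * (‖(x : ℤ → ℂ) (j0 + n k')‖ * ω (j0 + n k'))))) atTop (𝓝 0) := by
        have h2 := ((hA.const_mul (2/c)).const_mul (C'^D)).const_mul (∑ j ∈ sv, ‖v j‖)
        simpa [mul_assoc] using h2
      exact h1.eventually_lt_const (by positivity)
    obtain ⟨k', hk1', hk2', hk3', hk4'⟩ :=
      (hlow.and ((hnint.eventually_ge_atTop (-t)).and (hev3.and hev4))).exists
    have hlamk' : lam k' ≠ 0 := by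
      intro h
      rw [h] at hk1'
      simp at hk1'
      linarith
    have hlamk'' : (0:ℝ) < ‖lam k'‖ := norm_pos_iff.2 hlamk'
    set m : ℕ := ((n k' : ℤ) + t).toNat with hmdef
    have hm : (m : ℤ) = (n k' : ℤ) + t := Int.toNat_of_nonneg (by omega)
    set X0 : ℝ := ‖(x : ℤ → ℂ) (j0 + n k')‖ with hX0def
    have hprod : c/2 < ‖lam k'‖ * X0 := by rw [hX0def, ← norm_mul]; exact hk1'
    have hfa : ‖lam k'‖⁻¹ ≤ (2/c) * X0 := by
      have h6 : 1 ≤ ((2/c) * X0) * ‖lam k'‖ := by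
        have h7 : (2/c) * (c/2) ≤ (2/c) * (‖lam k'‖ * X0) :=
          mul_le_mul_of_nonneg_left hprod.le (by positivity)
        calc (1:ℝ) = (2/c)*(c/2) := by field_simp
          _ ≤ (2/c) * (‖lam k'‖ * X0) := h7
          _ = ((2/c) * X0) * ‖lam k'‖ := by ring
      calc ‖lam k'‖⁻¹ = 1 * ‖lam k'‖⁻¹ := by ring
        _ ≤ (((2/c) * X0) * ‖lam k'‖) * ‖lam k'‖⁻¹ :=
            mul_le_mul_of_nonneg_right h6 (by positivity)
        _ = (2/c) * X0 * (‖lam k'‖ * ‖lam k'‖⁻¹) := by ring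
        _ = (2/c) * X0 := by rw [mul_inv_cancel₀ hlamk''.ne', mul_one]
    set vs : ℤ → ℂ := fun k => (lam k')⁻¹ * v (k - m) with hvsdef
    set svs : Finset ℤ := sv.image (fun j => j + (m:ℤ)) with hsvsdef
    have hvs : ∀ j ∉ svs, vs j = 0 := by
      intro j hj
      have hj2 : j - (m:ℤ) ∉ sv := by
        intro hmem
        exact hj (Finset.mem_image.2 ⟨j - m, hmem, by ring⟩)
      simp [hvsdef, hsv _ hj2]
    set bu : ℤ → ℂ := fun k => lam k' * u (k + m) with hbudef
    set sbu : Finset ℤ := su.image (fun j => j - (m:ℤ)) with hsbudef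
    have hbu : ∀ j ∉ sbu, bu j = 0 := by
      intro j hj
      have hj2 : j + (m:ℤ) ∉ su := by
        intro hmem
        exact hj (Finset.mem_image.2 ⟨j + m, hmem, by ring⟩)
      simp [hbudef, hsu _ hj2]
    set fvs := fin hω hp vs svs hvs with hfvsdef
    set fu := fin hω hp u su hsu with hfudef
    set fv := fin hω hp v sv hsv with hfvdef
    set fbu := fin hω hp bu sbu hbu with hfbudef
    set w : X p ω := fu + fvs with hwdef
    -- norm of the forward part
    have hfvsnorm : ‖fvs‖ < ε1/4 := by
      refine lt_of_le_of_lt ?_ hk4'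
      rw [hfvsdef]
      refine (Stmt13.norm_fin_le hω hp vs svs hvs).trans ?_
      rw [hsvsdef, Finset.sum_image (by intro a _ b _ h; beta_reduce at h; omega)]
      rw [Finset.sum_mul]
      refine Finset.sum_le_sum ?_
      intro j hj
      have hval : vs (j + (m:ℤ)) = (lam k')⁻¹ * v j := by
        rw [hvsdef]; simp
      have hω1 : ω (j + (m:ℤ)) ≤ C'^D * ω (j0 + n k') := by
        refine hbig D (j + m) (j0 + n k') ?_ ?_
        · have := hMv' j hj; omega
        · have h8 := hMv' j hj
          have h9 : (D:ℤ) = Mv - mv := Int.toNat_of_nonneg (by omega)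
          have h10 := hmv' j hj
          omega
      calc ‖vs (j + (m:ℤ))‖ * ω (j + (m:ℤ))
          = ‖v j‖ * (‖lam k'‖⁻¹ * ω (j + (m:ℤ))) := by
            rw [hval, norm_mul, norm_inv]; ring
        _ ≤ ‖v j‖ * (((2/c) * X0) * (C'^D * ω (j0 + n k'))) := by
            refine mul_le_mul_of_nonneg_left ?_ (norm_nonneg _)
            refine mul_le_mul hfa hω1 (hω _).le (by positivity)
        _ = ‖v j‖ * (C'^D * ((2/c) * (X0 * ω (j0 + n k')))) := by ring
    -- norm of the backward part
    have hfbunorm : ‖fbu‖ < ε2/2 := by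
      refine lt_of_le_of_lt ?_ hk3'
      rw [hfbudef]
      refine (Stmt13.norm_fin_le hω hp bu sbu hbu).trans ?_
      rw [hsbudef, Finset.sum_image (by intro a _ b _ h; beta_reduce at h; omega)]
      rw [Finset.sum_mul]
      refine Finset.sum_le_sum ?_
      intro j hj
      have hval : bu (j - (m:ℤ)) = lam k' * u j := by
        rw [hbudef]; simp
      have hω1 : ω (j - (m:ℤ)) ≤ C'^D' * ω (q k') := by
        refine hbig D' (j - m) (q k') ?_ ?_
        · have := hMu' j hj
          have hqk : q k' = j0 + (n k0 : ℤ) - n k' := by rw [hqdef]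
          omega
        · have h8 := hMu' j hj
          have h10 := hmu' j hj
          have h9 : (D':ℤ) = j0 + (n k0:ℤ) + t - mu := Int.toNat_of_nonneg hD'nn
          have hqk : q k' = j0 + (n k0 : ℤ) - n k' := by rw [hqdef]
          omega
      have hRk : R k' = ‖lam k'‖ * ω (q k') := by rw [hRdef]
      calc ‖bu (j - (m:ℤ))‖ * ω (j - (m:ℤ))
          = ‖u j‖ * (‖lam k'‖ * ω (j - (m:ℤ))) := by
            rw [hval, norm_mul]; ring
        _ ≤ ‖u j‖ * (‖lam k'‖ * (C'^D' * ω (q k'))) := by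
            refine mul_le_mul_of_nonneg_left ?_ (norm_nonneg _)
            exact mul_le_mul_of_nonneg_left hω1 (norm_nonneg _)
        _ = ‖u j‖ * (C'^D' * R k') := by rw [hRk]; ring
    -- the two exact identities
    have claimA : lam k' • (B ^ m) fvs = fv := by
      apply Stmt13.ext_coords hω hp
      intro k
      rw [Stmt13.coe_smul hω hp, hpow, hfvsdef, Stmt13.coe_fin hω hp, hfvdef,
        Stmt13.coe_fin hω hp, hvsdef]
      simp only [add_sub_cancel_right]
      field_simp
    have claimB : lam k' • (B ^ m) fu = fbu := by
      apply Stmt13.ext_coords hω hp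
      intro k
      rw [Stmt13.coe_smul hω hp, hpow, hfudef, Stmt13.coe_fin hω hp, hfbudef,
        Stmt13.coe_fin hω hp, hbudef]
    have hTw : T (Nat.pair k' m) w = fbu + fv := by
      rw [hTdef]
      simp only [Nat.unpair_pair]
      rw [hwdef, map_add, smul_add, claimA, claimB]
    refine ⟨Nat.pair k' m, w, ?_, ?_⟩
    · refine hball1 ?_
      rw [Metric.mem_ball, dist_eq_norm]
      have hsplit : w - u' = (fu - u') + fvs := by rw [hwdef]; abel
      calc ‖w - u'‖ = ‖(fu - u') + fvs‖ := by rw [hsplit]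
        _ ≤ ‖fu - u'‖ + ‖fvs‖ := norm_add_le _ _
        _ = ‖u' - fu‖ + ‖fvs‖ := by rw [norm_sub_rev]
        _ < ε1/4 + ε1/4 := add_lt_add hu hfvsnorm
        _ < ε1 := by linarith
    · refine hball2 ?_
      rw [Metric.mem_ball, dist_eq_norm, hTw]
      have hsplit : fbu + fv - v' = fbu + (fv - v') := by abel
      calc ‖fbu + fv - v'‖ = ‖fbu + (fv - v')‖ := by rw [hsplit]
        _ ≤ ‖fbu‖ + ‖fv - v'‖ := norm_add_le _ _
        _ = ‖fbu‖ + ‖v' - fv‖ := by rw [norm_sub_rev]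
        _ < ε2/2 + ε2/2 := add_lt_add hfbunorm hv
        _ = ε2 := by ring
  obtain ⟨z, hz⟩ := Stmt13.birkhoff T hTc htrans
  refine ⟨z, Dense.mono ?_ hz⟩
  rintro w ⟨i, rfl⟩
  exact ⟨lam i.unpair.1, hlam _, i.unpair.2, rfl⟩
end
end
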